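/- arXiv:2302.07664 — 4 statements merged into one kernel-verified Lean document; each statement's English description precedes it below -/
import Mathlib

section
/- Let L := Σ_{l≥1} (μ(l)/l)·log(1+X_l) ∈ R (this family is summable). Then (i) exp( Σ_{k≥1} (1/k)·ψ_k(L) ) = 1 + X₁, and (ii) Σ_{l≥1} (μ(l)/l)·log( ψ_l( exp( Σ_{k≥1} X_k/k ) ) ) = X₁; in both identities all indicated families are summable in the coefficientwise topology. (Under the identification p_m ↦ X_m these are the plethystic identities (E−1)∘L = h₁ = L∘(E−1), where E = Σ_{r≥0} h_r = exp(Σ_{k≥1} p_k/k) and L = Σ_{k≥1} (μ(k)/k) log(1+p_k).) -/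
set_option maxHeartbeats 1000000

noncomputable section

open scoped Classical

namespace Stmt0

instance : TopologicalSpace (MvPowerSeries ℕ+ ℚ) :=
  @Pi.topologicalSpace (ℕ+ →₀ ℕ) (fun _ => ℚ) (fun _ => ⊥)

abbrev R : Type := MvPowerSeries ℕ+ ℚ

def mexp (f : R) : R := ∑' n : ℕ, ((n.factorial : ℚ))⁻¹ • f ^ n

def mlog1p (f : R) : R := ∑' n : ℕ, ((-1 : ℚ) ^ n / (n + 1)) • f ^ (n + 1)

def psi (k : ℕ+) (f : R) : R := fun e =>
  if h : ∃ e' : ℕ+ →₀ ℕ, Finsupp.mapDomain (fun m : ℕ+ => k * m) e' = e then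
    MvPowerSeries.coeff h.choose f
  else 0

/-! ### Infrastructure -/

instance : T2Space R :=
  @Pi.t2Space (ℕ+ →₀ ℕ) (fun _ => ℚ) (fun _ => ⊥)
    (fun _ => @DiscreteTopology.toT2Space ℚ ⊥ (discreteTopology_bot ℚ))

def qHasSum {ι : Type} (c : ι → ℚ) (a : ℚ) : Prop :=
  letI : TopologicalSpace ℚ := ⊥
  HasSum c a

lemma hasSum_iff_coeff {ι : Type} (F : ι → R) (g : R) :
    HasSum F g ↔ ∀ e, qHasSum (fun i => F i e) (g e) := by
  letI : TopologicalSpace ℚ := ⊥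
  exact Pi.hasSum

lemma hasSum_pointwise {ι : Type} {F : ι → R} (s : (ℕ+ →₀ ℕ) → Finset ι)
    (h : ∀ e, ∀ i ∉ s e, F i e = 0) :
    HasSum F (fun e => ∑ i ∈ s e, F i e) := by
  refine (hasSum_iff_coeff _ _).mpr ?_
  intro e
  letI : TopologicalSpace ℚ := ⊥
  exact hasSum_sum_of_ne_finset_zero (h e)

/-! ### degree -/

def deg (e : ℕ+ →₀ ℕ) : ℕ := e.sum fun _ n => n

lemma deg_add (a b : ℕ+ →₀ ℕ) : deg (a + b) = deg a + deg b :=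
  Finsupp.sum_add_index' (fun _ => rfl) (fun _ _ _ => rfl)

lemma deg_zero : deg 0 = 0 := by simp [deg]

lemma deg_eq_zero_iff {e : ℕ+ →₀ ℕ} : deg e = 0 ↔ e = 0 := by
  constructor
  · intro h
    ext x
    rcases em (x ∈ e.support) with hx | hx
    · simpa using Finset.sum_eq_zero_iff.mp h x hx
    · simpa using Finsupp.notMem_support_iff.mp hx
  · rintro rfl; exact deg_zero

lemma deg_single (l : ℕ+) (m : ℕ) : deg (Finsupp.single l m) = m :=
  Finsupp.sum_single_index rfl

lemma deg_pos {e : ℕ+ →₀ ℕ} (h : e ≠ 0) : 0 < deg e :=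
  Nat.pos_of_ne_zero fun h0 => h (deg_eq_zero_iff.mp h0)

/-! ### application lemmas -/

lemma zero_app (e : ℕ+ →₀ ℕ) : (0 : R) e = 0 := rfl

lemma add_app (f g : R) (e : ℕ+ →₀ ℕ) : (f + g) e = f e + g e := rfl

lemma sub_app (f g : R) (e : ℕ+ →₀ ℕ) : (f - g) e = f e - g e := rfl

lemma neg_app (f : R) (e : ℕ+ →₀ ℕ) : (-f) e = -(f e) := rfl

lemma smul_app (c : ℚ) (f : R) (e : ℕ+ →₀ ℕ) : (c • f) e = c * f e := rfl

lemma sum_app {ι : Type*} (s : Finset ι) (F : ι → R) (e : ℕ+ →₀ ℕ) :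
    (∑ i ∈ s, F i) e = ∑ i ∈ s, F i e := by
  rw [← MvPowerSeries.coeff_apply (∑ i ∈ s, F i) e, map_sum]
  simp [MvPowerSeries.coeff_apply]

lemma mul_app (f g : R) (e : ℕ+ →₀ ℕ) :
    (f * g) e = ∑ p ∈ Finset.HasAntidiagonal.antidiagonal e, f p.1 * g p.2 := by
  simpa only [MvPowerSeries.coeff_apply] using (MvPowerSeries.coeff_mul (n := e) (φ := f) (ψ := g))

lemma one_app (e : ℕ+ →₀ ℕ) : (1 : R) e = if e = 0 then 1 else 0 := by
  rw [← MvPowerSeries.coeff_apply (1 : R) e, MvPowerSeries.coeff_one]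

lemma Xpow_app (l : ℕ+) (n : ℕ) (e : ℕ+ →₀ ℕ) :
    ((MvPowerSeries.X l : R) ^ n) e = if e = Finsupp.single l n then 1 else 0 := by
  rw [← MvPowerSeries.coeff_apply (MvPowerSeries.X l ^ n) e, MvPowerSeries.X_pow_eq, MvPowerSeries.coeff_monomial]

lemma X_app (l : ℕ+) (e : ℕ+ →₀ ℕ) :
    (MvPowerSeries.X l : R) e = if e = Finsupp.single l 1 then 1 else 0 := by
  rw [← pow_one (MvPowerSeries.X l : R)]
  exact Xpow_app l 1 e

lemma X_app_zero (l : ℕ+) : (MvPowerSeries.X l : R) 0 = 0 := by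
  rw [X_app, if_neg]
  intro hc
  exact one_ne_zero (Finsupp.single_eq_zero.mp hc.symm)

/-! ### order lemma -/

lemma pow_app_eq_zero {f : R} (hf : f 0 = 0) :
    ∀ {n : ℕ} {e : ℕ+ →₀ ℕ}, deg e < n → (f ^ n) e = 0 := by
  intro n
  induction n with
  | zero => exact fun h => absurd h (Nat.not_lt_zero _)
  | succ n ih =>
    intro e h
    rw [pow_succ, mul_app]
    refine Finset.sum_eq_zero fun p hp => ?_
    rw [Finset.HasAntidiagonal.mem_antidiagonal] at hp
    rcases eq_or_ne p.2 0 with h2 | h2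
    · rw [h2, hf, mul_zero]
    · have hd : deg p.1 + deg p.2 = deg e := by rw [← deg_add, hp]
      have h3 : deg p.1 < n := by have := deg_pos h2; omega
      rw [ih h3, zero_mul]

/-! ### truncations -/

def expT (N : ℕ) (f : R) : R := ∑ n ∈ Finset.range N, ((n.factorial : ℚ))⁻¹ • f ^ n

def logT (N : ℕ) (f : R) : R := ∑ n ∈ Finset.range N, ((-1 : ℚ) ^ n / (n + 1)) • f ^ (n + 1)

lemma hasSum_mexp {f : R} (hf : f 0 = 0) :
    HasSum (fun n : ℕ => ((n.factorial : ℚ))⁻¹ • f ^ n)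
      (fun e => ∑ n ∈ Finset.range (deg e + 1), (((n.factorial : ℚ))⁻¹ • f ^ n) e) := by
  refine hasSum_pointwise _ fun e n hn => ?_
  have h1 : deg e < n := by
    rcases Nat.lt_or_ge (deg e) n with h | h
    · exact h
    · exact absurd (Finset.mem_range.mpr (Nat.lt_succ_of_le h)) hn
  rw [smul_app, pow_app_eq_zero hf h1, mul_zero]

lemma mexp_eq {f : R} (hf : f 0 = 0) :
    mexp f = fun e => ∑ n ∈ Finset.range (deg e + 1), (((n.factorial : ℚ))⁻¹ • f ^ n) e :=
  (hasSum_mexp hf).tsum_eq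

lemma mexp_app {f : R} (hf : f 0 = 0) (e : ℕ+ →₀ ℕ) :
    mexp f e = ∑ n ∈ Finset.range (deg e + 1), ((n.factorial : ℚ))⁻¹ * (f ^ n) e := by
  rw [mexp_eq hf]
  exact Finset.sum_congr rfl fun n _ => smul_app _ _ _

lemma hasSum_mlog1p {f : R} (hf : f 0 = 0) :
    HasSum (fun n : ℕ => ((-1 : ℚ) ^ n / (n + 1)) • f ^ (n + 1))
      (fun e => ∑ n ∈ Finset.range (deg e), (((-1 : ℚ) ^ n / (n + 1)) • f ^ (n + 1)) e) := by
  refine hasSum_pointwise _ fun e n hn => ?_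
  have h1 : deg e < n + 1 := by
    rcases Nat.lt_or_ge n (deg e) with h | h
    · exact absurd (Finset.mem_range.mpr h) hn
    · omega
  rw [smul_app, pow_app_eq_zero hf h1, mul_zero]

lemma mlog1p_eq {f : R} (hf : f 0 = 0) :
    mlog1p f = fun e => ∑ n ∈ Finset.range (deg e), (((-1 : ℚ) ^ n / (n + 1)) • f ^ (n + 1)) e :=
  (hasSum_mlog1p hf).tsum_eq

lemma mlog1p_app {f : R} (hf : f 0 = 0) (e : ℕ+ →₀ ℕ) :
    mlog1p f e = ∑ n ∈ Finset.range (deg e), ((-1 : ℚ) ^ n / (n + 1)) * (f ^ (n + 1)) e := by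
  rw [mlog1p_eq hf]
  exact Finset.sum_congr rfl fun n _ => smul_app _ _ _

lemma mexp_eq_expT {f : R} (hf : f 0 = 0) {e : ℕ+ →₀ ℕ} {N : ℕ} (h : deg e < N) :
    mexp f e = expT N f e := by
  rw [mexp_app hf, expT, sum_app]
  simp only [smul_app]
  refine Finset.sum_subset (Finset.range_subset_range.mpr (by omega)) fun n hn hn' => ?_
  have h1 : deg e < n := by
    rcases Nat.lt_or_ge (deg e) n with h2 | h2
    · exact h2
    · exact absurd (Finset.mem_range.mpr (Nat.lt_succ_of_le h2)) hn'
  rw [pow_app_eq_zero hf h1, mul_zero]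

lemma mlog1p_eq_logT {f : R} (hf : f 0 = 0) {e : ℕ+ →₀ ℕ} {N : ℕ} (h : deg e ≤ N) :
    mlog1p f e = logT N f e := by
  rw [mlog1p_app hf, logT, sum_app]
  simp only [smul_app]
  refine Finset.sum_subset (Finset.range_subset_range.mpr (by omega)) fun n hn hn' => ?_
  have h1 : deg e < n + 1 := by
    rcases Nat.lt_or_ge n (deg e) with h2 | h2
    · exact absurd (Finset.mem_range.mpr h2) hn'
    · omega
  rw [pow_app_eq_zero hf h1, mul_zero]

lemma mexp_app_zero {f : R} (hf : f 0 = 0) : mexp f 0 = 1 := by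
  rw [mexp_app hf]
  simp [deg_zero, one_app]

lemma mlog1p_app_zero {f : R} (hf : f 0 = 0) : mlog1p f 0 = 0 := by
  rw [mlog1p_app hf]
  simp [deg_zero]

/-! ### the Euler derivation -/

def Dop (f : R) : R := fun e => (deg e : ℚ) * f e

lemma Dop_app (f : R) (e : ℕ+ →₀ ℕ) : Dop f e = (deg e : ℚ) * f e := rfl

lemma Dop_mul (f g : R) : Dop (f * g) = Dop f * g + f * Dop g := by
  funext e
  rw [add_app, mul_app, mul_app, Dop_app, mul_app, Finset.mul_sum, ← Finset.sum_add_distrib]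
  refine Finset.sum_congr rfl fun p hp => ?_
  have hs := Finset.HasAntidiagonal.mem_antidiagonal.mp hp
  have hd : ((deg p.1 : ℚ) + deg p.2) = deg e := by
    rw [← Nat.cast_add, ← deg_add, hs]
  calc (deg e : ℚ) * (f p.1 * g p.2)
      = ((deg p.1 : ℚ) + deg p.2) * (f p.1 * g p.2) := by rw [hd]
    _ = Dop f p.1 * g p.2 + f p.1 * Dop g p.2 := by
        simp only [Dop_app]; ring

lemma Dop_one : Dop (1 : R) = 0 := by
  funext e
  rcases eq_or_ne e 0 with rfl | h
  · simp [Dop_app, deg_zero, zero_app]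
  · simp [Dop_app, one_app, h, zero_app]

lemma Dop_sub (f g : R) : Dop (f - g) = Dop f - Dop g := by
  funext e
  simp only [Dop_app, sub_app]
  ring

lemma Dop_smul (c : ℚ) (f : R) : Dop (c • f) = c • Dop f := by
  funext e
  simp only [Dop_app, smul_app]
  ring

lemma Dop_sum {ι : Type*} (s : Finset ι) (F : ι → R) :
    Dop (∑ i ∈ s, F i) = ∑ i ∈ s, Dop (F i) := by
  funext e
  simp only [Dop_app, sum_app, Finset.mul_sum]

lemma Dop_pow (f : R) (n : ℕ) : Dop (f ^ (n + 1)) = ((n + 1 : ℕ) : ℚ) • (f ^ n * Dop f) := by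
  induction n with
  | zero => simp [pow_one, pow_zero, one_mul]
  | succ n ih =>
    rw [pow_succ, Dop_mul, ih, smul_mul_assoc]
    have h1 : f ^ n * Dop f * f = f ^ (n + 1) * Dop f := by ring
    rw [h1]
    have h2 : ((n + 2 : ℕ) : ℚ) = ((n + 1 : ℕ) : ℚ) + 1 := by push_cast; ring
    rw [h2, add_smul, one_smul]

lemma eq_of_Dop_eq {f g : R} (h : Dop f = Dop g) (h0 : f 0 = g 0) : f = g := by
  funext e
  rcases eq_or_ne e 0 with rfl | he
  · exact h0
  · have h1 := congrFun h e
    have hde : ((deg e : ℚ)) ≠ 0 := by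
      exact_mod_cast (deg_pos he).ne'
    exact mul_left_cancel₀ hde h1

lemma eq_zero_of_mul_eq_zero {g w : R} (hg : g 0 ≠ 0) (h : g * w = 0) : w = 0 := by
  have main : ∀ d : ℕ, ∀ e, deg e ≤ d → w e = 0 := by
    intro d
    induction d using Nat.strong_induction_on with
    | _ d IH =>
      intro e hde
      have hmem : ((0 : ℕ+ →₀ ℕ), e) ∈ Finset.HasAntidiagonal.antidiagonal e :=
        Finset.HasAntidiagonal.mem_antidiagonal.mpr (zero_add e)
      have h0 : (g * w) e = 0 := by rw [h]; rfl
      rw [mul_app, ← Finset.add_sum_erase _ _ hmem] at h0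
      have hz : ∀ p ∈ (Finset.HasAntidiagonal.antidiagonal e).erase (0, e), g p.1 * w p.2 = 0 := by
        intro p hp
        obtain ⟨hpne, hpmem⟩ := Finset.mem_erase.mp hp
        have hsum := Finset.HasAntidiagonal.mem_antidiagonal.mp hpmem
        have h1 : p.1 ≠ 0 := by
          intro h1
          exact hpne (Prod.ext h1 (by rw [← hsum, h1, zero_add]))
        have h2 : deg p.2 < deg e := by
          have := deg_add p.1 p.2
          rw [hsum] at this
          have := deg_pos h1
          omega
        rw [IH (deg p.2) (lt_of_lt_of_le h2 hde) p.2 le_rfl, mul_zero]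
      rw [Finset.sum_eq_zero hz, add_zero] at h0
      exact (mul_eq_zero.mp h0).resolve_left hg
  funext e
  exact main (deg e) e le_rfl

/-! ### EqB -/

def EqB (N : ℕ) (f g : R) : Prop := ∀ e, deg e < N → f e = g e

lemma EqB.refl (N : ℕ) (f : R) : EqB N f f := fun _ _ => rfl

lemma EqB.mul {N : ℕ} {f f' g g' : R} (h1 : EqB N f f') (h2 : EqB N g g') :
    EqB N (f * g) (f' * g') := by
  intro e he
  rw [mul_app, mul_app]
  refine Finset.sum_congr rfl fun p hp => ?_
  have hs := Finset.HasAntidiagonal.mem_antidiagonal.mp hp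
  have hd := deg_add p.1 p.2
  rw [hs] at hd
  rw [h1 p.1 (by omega), h2 p.2 (by omega)]

lemma EqB.dop {N : ℕ} {f g : R} (h : EqB N f g) : EqB N (Dop f) (Dop g) := by
  intro e he
  rw [Dop_app, Dop_app, h e he]

lemma eq_of_eqB {f g : R} (h : ∀ N, EqB N f g) : f = g :=
  funext fun e => h (deg e + 1) e (Nat.lt_succ_self _)

lemma eqB_mexp_expT {f : R} (hf : f 0 = 0) (N : ℕ) : EqB N (mexp f) (expT N f) :=
  fun _ he => mexp_eq_expT hf he

lemma eqB_mlog1p_logT {f : R} (hf : f 0 = 0) (N : ℕ) : EqB N (mlog1p f) (logT N f) :=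
  fun _ he => mlog1p_eq_logT hf (le_of_lt he)

lemma eqB_pow_mul {f g : R} (hf : f 0 = 0) (N : ℕ) : EqB N (f ^ N * g) 0 := by
  intro e he
  rw [mul_app, zero_app]
  refine Finset.sum_eq_zero fun p hp => ?_
  have hs := Finset.HasAntidiagonal.mem_antidiagonal.mp hp
  have hd := deg_add p.1 p.2
  rw [hs] at hd
  rw [pow_app_eq_zero hf (show deg p.1 < N by omega), zero_mul]

/-! ### derivatives of truncations -/

lemma Dop_expT (f : R) (N : ℕ) : Dop (expT (N + 1) f) = Dop f * expT N f := by
  unfold expT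
  rw [Dop_sum]
  simp only [Dop_smul]
  rw [Finset.sum_range_succ']
  simp only [Dop_pow]
  rw [pow_zero, Dop_one, smul_zero, add_zero, Finset.mul_sum]
  refine Finset.sum_congr rfl fun n _ => ?_
  rw [smul_smul]
  have h2 : (n.factorial : ℚ) ≠ 0 := Nat.cast_ne_zero.mpr n.factorial_ne_zero
  have h3 : ((n + 1 : ℕ) : ℚ) ≠ 0 := by positivity
  have hfac : (((n + 1).factorial : ℚ))⁻¹ * ((n + 1 : ℕ) : ℚ) = ((n.factorial : ℚ))⁻¹ := by
    rw [Nat.factorial_succ]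
    push_cast
    field_simp
  rw [hfac, mul_comm (Dop f) (((n.factorial : ℚ))⁻¹ • f ^ n), smul_mul_assoc]

lemma Dop_logT (f : R) (N : ℕ) :
    (1 + f) * Dop (logT N f) = Dop f - (-f) ^ N * Dop f := by
  unfold logT
  rw [Dop_sum]
  simp only [Dop_smul, Dop_pow]
  have hterm : ∀ n : ℕ, ((-1 : ℚ) ^ n / (n + 1)) • (((n + 1 : ℕ) : ℚ) • (f ^ n * Dop f))
      = (-f) ^ n * Dop f := by
    intro n
    rw [smul_smul]
    have h3 : ((n : ℚ) + 1) ≠ 0 := by positivity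
    have hc : ((-1 : ℚ) ^ n / (n + 1)) * ((n + 1 : ℕ) : ℚ) = (-1 : ℚ) ^ n := by
      push_cast
      field_simp
    rw [hc]
    have hneg : (-f : R) = (-1 : ℚ) • f := by rw [neg_one_smul]
    rw [hneg, smul_pow, smul_mul_assoc]
  rw [Finset.sum_congr rfl fun n _ => hterm n, ← Finset.sum_mul, ← mul_assoc]
  have hgeom : (1 + f) * (∑ n ∈ Finset.range N, (-f) ^ n) = 1 - (-f) ^ N := by
    have hg := geom_sum_mul (-f) N
    have h2 : (1 + f) * (∑ n ∈ Finset.range N, (-f) ^ n)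
        = -((∑ n ∈ Finset.range N, (-f) ^ n) * (-f - 1)) := by ring
    rw [h2, hg]
    ring
  rw [hgeom]
  ring

/-! ### derivative of mexp and mlog1p -/

lemma Dop_mexp {f : R} (hf : f 0 = 0) : Dop (mexp f) = Dop f * mexp f := by
  apply eq_of_eqB
  intro N e he
  have h1 : Dop (mexp f) e = Dop (expT (N + 1) f) e := by
    rw [Dop_app, Dop_app, mexp_eq_expT hf (lt_trans he (Nat.lt_succ_self N))]
  have h2 : (Dop f * expT N f) e = (Dop f * mexp f) e :=
    (EqB.mul (EqB.refl N (Dop f)) (fun e' he' => (mexp_eq_expT hf he').symm)) e he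
  rw [h1, Dop_expT, h2]

lemma Dop_mlog1p {f : R} (hf : f 0 = 0) : (1 + f) * Dop (mlog1p f) = Dop f := by
  apply eq_of_eqB
  intro N e he
  have h1 : ((1 + f) * Dop (mlog1p f)) e = ((1 + f) * Dop (logT N f)) e :=
    (EqB.mul (EqB.refl N (1 + f)) ((eqB_mlog1p_logT hf N).dop)) e he
  rw [h1, Dop_logT, sub_app]
  have hneg : (-f : R) 0 = 0 := by rw [neg_app, hf, neg_zero]
  have h2 := eqB_pow_mul (g := Dop f) hneg N e he
  rw [h2, zero_app, sub_zero]

/-! ### exp ∘ log = id -/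

theorem mexp_mlog1p {f : R} (hf : f 0 = 0) : mexp (mlog1p f) = 1 + f := by
  have hl : mlog1p f 0 = 0 := mlog1p_app_zero hf
  set g := mexp (mlog1p f) with hg
  have key : (1 + f) * Dop g = Dop f * g := by
    calc (1 + f) * Dop g = (1 + f) * (Dop (mlog1p f) * g) := by rw [hg, Dop_mexp hl]
      _ = ((1 + f) * Dop (mlog1p f)) * g := by ring
      _ = Dop f * g := by rw [Dop_mlog1p hf]
  have main : ∀ d : ℕ, ∀ e, deg e = d → g e = (1 + f) e := by
    intro d
    induction d using Nat.strong_induction_on with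
    | _ d IH =>
      intro e hde
      rcases eq_or_ne e 0 with rfl | he
      · rw [hg, mexp_app_zero hl, add_app, one_app, if_pos rfl, hf, add_zero]
      · have hkey := congrFun key e
        rw [mul_app, mul_app] at hkey
        have hsplit : ∀ p ∈ Finset.HasAntidiagonal.antidiagonal e,
            (1 + f) p.1 * Dop g p.2
              = (if p.1 = 0 then Dop g p.2 else 0) + f p.1 * Dop g p.2 := by
          intro p _
          rw [add_app, one_app]
          split_ifs <;> ring
        rw [Finset.sum_congr rfl hsplit, Finset.sum_add_distrib] at hkey
        have hind : ∑ p ∈ Finset.HasAntidiagonal.antidiagonal e, (if p.1 = 0 then Dop g p.2 else 0)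
            = (deg e : ℚ) * g e := by
          rw [Finset.sum_eq_single ((0 : ℕ+ →₀ ℕ), e)]
          · rw [if_pos rfl, Dop_app]
          · intro p hp hne
            rw [if_neg]
            intro h1
            exact hne (Prod.ext h1 (by
              have := Finset.HasAntidiagonal.mem_antidiagonal.mp hp
              rw [h1, zero_add] at this
              exact this))
          · intro hnm
            exact absurd (Finset.HasAntidiagonal.mem_antidiagonal.mpr (zero_add e)) hnm
        rw [hind] at hkey
        have hkey2 : (deg e : ℚ) * g e
            = ∑ p ∈ Finset.HasAntidiagonal.antidiagonal e, ((deg p.1 : ℚ) - deg p.2) * (f p.1 * g p.2) := by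
          have hexp : ∑ p ∈ Finset.HasAntidiagonal.antidiagonal e, ((deg p.1 : ℚ) - deg p.2) * (f p.1 * g p.2)
              = ∑ p ∈ Finset.HasAntidiagonal.antidiagonal e, (Dop f p.1 * g p.2)
                - ∑ p ∈ Finset.HasAntidiagonal.antidiagonal e, (f p.1 * Dop g p.2) := by
            rw [← Finset.sum_sub_distrib]
            refine Finset.sum_congr rfl fun p _ => ?_
            simp only [Dop_app]
            ring
          rw [hexp, ← hkey]
          ring
        have hrepl : ∀ p ∈ Finset.HasAntidiagonal.antidiagonal e,
            ((deg p.1 : ℚ) - deg p.2) * (f p.1 * g p.2)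
              = ((deg p.1 : ℚ) - deg p.2) * (f p.1 * (1 + f) p.2) := by
          intro p hp
          rcases eq_or_ne p.1 0 with h1 | h1
          · rw [h1, hf]
            ring
          · have hs := Finset.HasAntidiagonal.mem_antidiagonal.mp hp
            have hd := deg_add p.1 p.2
            rw [hs, hde] at hd
            have hlt : deg p.2 < d := by have := deg_pos h1; omega
            rw [IH (deg p.2) hlt p.2 rfl]
        rw [Finset.sum_congr rfl hrepl] at hkey2
        have hsplit2 : ∀ p ∈ Finset.HasAntidiagonal.antidiagonal e,
            ((deg p.1 : ℚ) - deg p.2) * (f p.1 * (1 + f) p.2)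
              = ((deg p.1 : ℚ) - deg p.2) * (f p.1 * f p.2)
                + (if p.2 = 0 then ((deg p.1 : ℚ) - deg p.2) * f p.1 else 0) := by
          intro p _
          rw [add_app, one_app]
          split_ifs <;> ring
        rw [Finset.sum_congr rfl hsplit2, Finset.sum_add_distrib] at hkey2
        have hS : ∑ p ∈ Finset.HasAntidiagonal.antidiagonal e, ((deg p.1 : ℚ) - deg p.2) * (f p.1 * f p.2)
            = 0 := by
          have hswap : ∑ p ∈ Finset.HasAntidiagonal.antidiagonal e, ((deg p.1 : ℚ) - deg p.2) * (f p.1 * f p.2)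
              = ∑ p ∈ Finset.HasAntidiagonal.antidiagonal e,
                  -(((deg p.1 : ℚ) - deg p.2) * (f p.1 * f p.2)) := by
            conv_rhs => rw [← Finset.HasAntidiagonal.map_swap_antidiagonal (n := e)]
            rw [Finset.sum_map]
            refine Finset.sum_congr rfl fun p _ => ?_
            simp only [Function.Embedding.coeFn_mk, Prod.fst_swap, Prod.snd_swap]
            ring
          rw [Finset.sum_neg_distrib] at hswap
          linarith
        have hlast : ∑ p ∈ Finset.HasAntidiagonal.antidiagonal e,
            (if p.2 = 0 then ((deg p.1 : ℚ) - deg p.2) * f p.1 else 0)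
              = (deg e : ℚ) * f e := by
          rw [Finset.sum_eq_single ((e, (0 : ℕ+ →₀ ℕ)))]
          · rw [if_pos rfl, deg_zero]
            push_cast
            ring
          · intro p hp hne
            rw [if_neg]
            intro h1
            exact hne (Prod.ext (by
              have := Finset.HasAntidiagonal.mem_antidiagonal.mp hp
              rw [h1, add_zero] at this
              exact this) h1)
          · intro hnm
            exact absurd (Finset.HasAntidiagonal.mem_antidiagonal.mpr (add_zero e)) hnm
        rw [hS, hlast, zero_add] at hkey2
        have hde0 : ((deg e : ℚ)) ≠ 0 := by
          exact_mod_cast (deg_pos he).ne'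
        have hfin : g e = f e := mul_left_cancel₀ hde0 hkey2
        rw [hfin, add_app, one_app, if_neg he, zero_add]
  exact funext fun e => main (deg e) e rfl

/-! ### log ∘ exp = id -/

theorem mlog1p_mexp {f : R} (hf : f 0 = 0) : mlog1p (mexp f - 1) = f := by
  have hu : (mexp f - 1) 0 = 0 := by
    rw [sub_app, mexp_app_zero hf, one_app, if_pos rfl, sub_self]
  have h2 : (1 + (mexp f - 1)) * Dop (mlog1p (mexp f - 1)) = Dop (mexp f - 1) :=
    Dop_mlog1p hu
  have h3 : (1 : R) + (mexp f - 1) = mexp f := by ring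
  have h4 : Dop (mexp f - 1) = Dop (mexp f) := by rw [Dop_sub, Dop_one, sub_zero]
  rw [h3, h4, Dop_mexp hf] at h2
  have h5 : mexp f * (Dop (mlog1p (mexp f - 1)) - Dop f) = 0 := by
    rw [mul_sub, h2]
    ring
  have h6 : Dop (mlog1p (mexp f - 1)) - Dop f = 0 :=
    eq_zero_of_mul_eq_zero (by rw [mexp_app_zero hf]; norm_num) h5
  exact eq_of_Dop_eq (by rwa [sub_eq_zero] at h6) (by rw [mlog1p_app_zero hu, hf])

/-! ### psi -/

lemma jinj (k : ℕ+) : Function.Injective (fun m : ℕ+ => k * m) :=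
  fun _ _ h => mul_left_cancel h

lemma psi_apply_j (k : ℕ+) (f : R) (e : ℕ+ →₀ ℕ) :
    psi k f (Finsupp.mapDomain (fun m : ℕ+ => k * m) e) = f e := by
  have hex : ∃ e', Finsupp.mapDomain (fun m : ℕ+ => k * m) e'
      = Finsupp.mapDomain (fun m : ℕ+ => k * m) e := ⟨e, rfl⟩
  unfold psi
  rw [dif_pos hex, MvPowerSeries.coeff_apply]
  congr 1
  exact Finsupp.mapDomain_injective (jinj k) hex.choose_spec

lemma psi_apply_of_not (k : ℕ+) (f : R) (e : ℕ+ →₀ ℕ)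
    (h : ¬∃ e', Finsupp.mapDomain (fun m : ℕ+ => k * m) e' = e) : psi k f e = 0 := by
  unfold psi
  rw [dif_neg h]

lemma deg_jmap (k : ℕ+) (e : ℕ+ →₀ ℕ) :
    deg (Finsupp.mapDomain (fun m : ℕ+ => k * m) e) = deg e :=
  Finsupp.sum_mapDomain_index (fun _ => rfl) (fun _ _ _ => rfl)

lemma psi_zero_app (k : ℕ+) (f : R) : psi k f 0 = f 0 := by
  have := psi_apply_j k f 0
  rwa [Finsupp.mapDomain_zero] at this

lemma add_mem_range {k : ℕ+} {a b e : ℕ+ →₀ ℕ}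
    (h : a + b = Finsupp.mapDomain (fun m : ℕ+ => k * m) e) :
    ∃ a', Finsupp.mapDomain (fun m : ℕ+ => k * m) a' = a := by
  have hsup : ↑a.support ⊆ Set.range (fun m : ℕ+ => k * m) := by
    intro x hx
    have hx' : x ∈ a.support := hx
    have hxe : (a + b) x ≠ 0 := by
      rw [Finsupp.add_apply]
      have := Finsupp.mem_support_iff.mp hx'
      omega
    rw [h] at hxe
    have hmem : x ∈ (Finsupp.mapDomain (fun m : ℕ+ => k * m) e).support :=
      Finsupp.mem_support_iff.mpr hxe
    obtain ⟨y, _, hyx⟩ := Finset.mem_image.mp (Finsupp.mapDomain_support hmem)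
    exact ⟨y, hyx⟩
  exact ⟨_, Finsupp.mapDomain_comapDomain _ (jinj k) a hsup⟩

lemma psi_mul (k : ℕ+) (f g : R) : psi k (f * g) = psi k f * psi k g := by
  funext e
  by_cases hex : ∃ e', Finsupp.mapDomain (fun m : ℕ+ => k * m) e' = e
  · obtain ⟨e', rfl⟩ := hex
    rw [psi_apply_j, mul_app, mul_app]
    have himg : Finset.HasAntidiagonal.antidiagonal (Finsupp.mapDomain (fun m : ℕ+ => k * m) e')
        = (Finset.HasAntidiagonal.antidiagonal e').image (fun p =>
            (Finsupp.mapDomain (fun m : ℕ+ => k * m) p.1,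
             Finsupp.mapDomain (fun m : ℕ+ => k * m) p.2)) := by
      ext q
      simp only [Finset.mem_image, Finset.HasAntidiagonal.mem_antidiagonal]
      constructor
      · intro hq
        obtain ⟨a', ha⟩ := add_mem_range hq
        obtain ⟨b', hb⟩ := add_mem_range (by rw [add_comm] at hq; exact hq)
        refine ⟨(a', b'), ?_, Prod.ext ha hb⟩
        apply Finsupp.mapDomain_injective (jinj k)
        rw [Finsupp.mapDomain_add, ha, hb, hq]
      · rintro ⟨p, hp, rfl⟩
        rw [← Finsupp.mapDomain_add, hp]
    rw [himg, Finset.sum_image]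
    · exact Finset.sum_congr rfl fun p _ => by rw [psi_apply_j, psi_apply_j]
    · intro p _ q _ hpq
      have h1 := congrArg Prod.fst hpq
      have h2 := congrArg Prod.snd hpq
      exact Prod.ext (Finsupp.mapDomain_injective (jinj k) h1)
        (Finsupp.mapDomain_injective (jinj k) h2)
  · rw [psi_apply_of_not _ _ _ hex, mul_app]
    symm
    refine Finset.sum_eq_zero fun p hp => ?_
    by_cases h1 : ∃ a', Finsupp.mapDomain (fun m : ℕ+ => k * m) a' = p.1
    · by_cases h2 : ∃ b', Finsupp.mapDomain (fun m : ℕ+ => k * m) b' = p.2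
      · exfalso
        obtain ⟨a', ha⟩ := h1
        obtain ⟨b', hb⟩ := h2
        exact hex ⟨a' + b', by
          rw [Finsupp.mapDomain_add, ha, hb]
          exact Finset.HasAntidiagonal.mem_antidiagonal.mp hp⟩
      · rw [psi_apply_of_not _ _ _ h2, mul_zero]
    · rw [psi_apply_of_not _ _ _ h1, zero_mul]

lemma jmap_eq_zero_iff {k : ℕ+} {e : ℕ+ →₀ ℕ} :
    Finsupp.mapDomain (fun m : ℕ+ => k * m) e = 0 ↔ e = 0 := by
  constructor
  · intro h
    apply Finsupp.mapDomain_injective (jinj k)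
    rw [h, Finsupp.mapDomain_zero]
  · rintro rfl
    exact Finsupp.mapDomain_zero

lemma psi_one (k : ℕ+) : psi k (1 : R) = 1 := by
  funext e
  by_cases hex : ∃ e', Finsupp.mapDomain (fun m : ℕ+ => k * m) e' = e
  · obtain ⟨e', rfl⟩ := hex
    rw [psi_apply_j, one_app, one_app]
    by_cases h0 : e' = 0
    · rw [if_pos h0, if_pos (jmap_eq_zero_iff.mpr h0)]
    · rw [if_neg h0, if_neg (fun hc => h0 (jmap_eq_zero_iff.mp hc))]
  · rw [psi_apply_of_not _ _ _ hex, one_app, if_neg]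
    rintro rfl
    exact hex ⟨0, Finsupp.mapDomain_zero⟩

lemma psi_pow (k : ℕ+) (f : R) (n : ℕ) : psi k (f ^ n) = (psi k f) ^ n := by
  induction n with
  | zero => rw [pow_zero, pow_zero, psi_one]
  | succ n ih => rw [pow_succ, pow_succ, psi_mul, ih]

lemma psi_mexp (k : ℕ+) {f : R} (hf : f 0 = 0) : psi k (mexp f) = mexp (psi k f) := by
  have hpf : psi k f 0 = 0 := by rw [psi_zero_app, hf]
  funext e
  by_cases hex : ∃ e', Finsupp.mapDomain (fun m : ℕ+ => k * m) e' = e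
  · obtain ⟨e', rfl⟩ := hex
    rw [psi_apply_j, mexp_app hf, mexp_app hpf, deg_jmap]
    refine Finset.sum_congr rfl fun n _ => ?_
    rw [← psi_pow, psi_apply_j]
  · rw [psi_apply_of_not _ _ _ hex, mexp_app hpf]
    symm
    refine Finset.sum_eq_zero fun n _ => ?_
    rw [← psi_pow, psi_apply_of_not _ _ _ hex, mul_zero]

lemma jmap_single (k l : ℕ+) (m : ℕ) :
    Finsupp.mapDomain (fun x : ℕ+ => k * x) (Finsupp.single l m) = Finsupp.single (k * l) m :=
  Finsupp.mapDomain_single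

lemma jmap_single_preimage {k : ℕ+} {e' : ℕ+ →₀ ℕ} {n : ℕ+} {m : ℕ} (hm : m ≠ 0)
    (h : Finsupp.mapDomain (fun x : ℕ+ => k * x) e' = Finsupp.single n m) :
    ∃ l, k * l = n ∧ e' = Finsupp.single l m := by
  have he' : e' ≠ 0 := by
    rintro rfl
    rw [Finsupp.mapDomain_zero] at h
    exact hm (Finsupp.single_eq_zero.mp h.symm)
  obtain ⟨l, hl⟩ := Finsupp.support_nonempty_iff.mpr he'
  have happ : Finsupp.single n m (k * l) = e' l := by
    rw [← h, Finsupp.mapDomain_apply (jinj k)]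
  have hne : e' l ≠ 0 := Finsupp.mem_support_iff.mp hl
  have hkl : k * l = n := by
    by_contra hc
    rw [Finsupp.single_apply, if_neg fun hh => hc hh.symm] at happ
    exact hne happ.symm
  refine ⟨l, hkl, ?_⟩
  have hsub : e'.support ⊆ {l} := by
    intro x hx
    have happx : Finsupp.single n m (k * x) = e' x := by
      rw [← h, Finsupp.mapDomain_apply (jinj k)]
    have hnex : e' x ≠ 0 := Finsupp.mem_support_iff.mp hx
    have hkx : k * x = n := by
      by_contra hc
      rw [Finsupp.single_apply, if_neg fun hh => hc hh.symm] at happx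
      exact hnex happx.symm
    have hxl : x = l := mul_left_cancel (a := k) (by rw [hkx, hkl])
    simp [hxl]
  have hrep := Finsupp.support_subset_singleton.mp hsub
  rw [hrep]
  congr 1
  rw [← happ, Finsupp.single_apply, if_pos hkl.symm]

/-! ### coefficients of mlog1p (X l) -/

lemma Mlem1 (l : ℕ+) (m : ℕ) (hm : m ≠ 0) :
    mlog1p (MvPowerSeries.X l) (Finsupp.single l m) = (-1 : ℚ) ^ (m - 1) / (m : ℚ) := by
  rw [mlog1p_app (X_app_zero l), deg_single]
  have hm1 : m - 1 + 1 = m := Nat.succ_pred_eq_of_pos (Nat.pos_of_ne_zero hm)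
  rw [Finset.sum_eq_single (m - 1)]
  · rw [Xpow_app, hm1, if_pos rfl, mul_one]
    congr 1
    exact_mod_cast congrArg (Nat.cast : ℕ → ℚ) hm1
  · intro n _ hn
    rw [Xpow_app, if_neg, mul_zero]
    intro hc
    have := Finsupp.single_injective l hc
    omega
  · intro hc
    exact absurd (Finset.mem_range.mpr (by omega)) hc

lemma Mlem2 (l : ℕ+) (e : ℕ+ →₀ ℕ) (h : ∀ m : ℕ, e ≠ Finsupp.single l m) :
    mlog1p (MvPowerSeries.X l) e = 0 := by
  rw [mlog1p_app (X_app_zero l)]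
  refine Finset.sum_eq_zero fun n _ => ?_
  rw [Xpow_app, if_neg (h (n + 1)), mul_zero]

lemma Mzero (l : ℕ+) (e : ℕ+ →₀ ℕ) (h : ∀ m : ℕ, m ≠ 0 → e ≠ Finsupp.single l m) :
    mlog1p (MvPowerSeries.X l) e = 0 := by
  rcases eq_or_ne e 0 with rfl | he
  · exact mlog1p_app_zero (X_app_zero l)
  · refine Mlem2 l e fun m hc => ?_
    rcases eq_or_ne m 0 with rfl | hm
    · exact he (hc.trans (Finsupp.single_zero l))
    · exact h m hm hc

/-! ### L and its coefficients -/

def Lfam (l : ℕ+) : R :=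
  (((ArithmeticFunction.moebius (l : ℕ) : ℤ) : ℚ) / (l : ℚ)) • mlog1p (MvPowerSeries.X l)

def L : R := ∑' l : ℕ+, Lfam l

lemma Lfam_app_eq_zero (l : ℕ+) (e : ℕ+ →₀ ℕ)
    (h : ∀ m : ℕ, m ≠ 0 → e ≠ Finsupp.single l m) : Lfam l e = 0 := by
  rw [Lfam, smul_app, Mzero l e h, mul_zero]

lemma hasSum_Lfam : HasSum Lfam (fun e => ∑ l ∈ e.support, Lfam l e) := by
  refine hasSum_pointwise _ fun e l hl => ?_
  refine Lfam_app_eq_zero l e fun m hm hc => ?_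
  apply hl
  rw [hc, Finsupp.support_single_ne_zero l hm]
  exact Finset.mem_singleton_self l

lemma L_eq : L = fun e => ∑ l ∈ e.support, Lfam l e := hasSum_Lfam.tsum_eq

lemma Lapp1 (n : ℕ+) (m : ℕ) (hm : m ≠ 0) :
    L (Finsupp.single n m)
      = ((ArithmeticFunction.moebius (n : ℕ) : ℤ) : ℚ) / (n : ℚ)
        * ((-1 : ℚ) ^ (m - 1) / (m : ℚ)) := by
  rw [L_eq]
  simp only []
  rw [Finsupp.support_single_ne_zero n hm, Finset.sum_singleton, Lfam, smul_app, Mlem1 n m hm]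

lemma Lapp2 (e : ℕ+ →₀ ℕ) (h : ∀ (n : ℕ+) (m : ℕ), m ≠ 0 → e ≠ Finsupp.single n m) :
    L e = 0 := by
  rw [L_eq]
  simp only []
  exact Finset.sum_eq_zero fun l _ => Lfam_app_eq_zero l e (h l)

/-! ### S and its coefficients -/

def Efam (k : ℕ+) : R := ((k : ℚ))⁻¹ • (MvPowerSeries.X k : R)

def E : R := mexp (∑' k : ℕ+, Efam k)

def S : R := ∑' k : ℕ+, Efam k

lemma Efam_app_eq_zero (k : ℕ+) (e : ℕ+ →₀ ℕ) (h : e ≠ Finsupp.single k 1) :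
    Efam k e = 0 := by
  rw [Efam, smul_app, X_app, if_neg h, mul_zero]

lemma hasSum_Efam : HasSum Efam (fun e => ∑ k ∈ e.support, Efam k e) := by
  refine hasSum_pointwise _ fun e k hk => ?_
  refine Efam_app_eq_zero k e fun hc => ?_
  apply hk
  rw [hc, Finsupp.support_single_ne_zero k one_ne_zero]
  exact Finset.mem_singleton_self k

lemma S_eq : S = fun e => ∑ k ∈ e.support, Efam k e := hasSum_Efam.tsum_eq

lemma Sapp1 (k : ℕ+) : S (Finsupp.single k 1) = ((k : ℚ))⁻¹ := by
  rw [S_eq]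
  simp only []
  rw [Finsupp.support_single_ne_zero k one_ne_zero, Finset.sum_singleton, Efam, smul_app,
    X_app, if_pos rfl, mul_one]

lemma Sapp2 (e : ℕ+ →₀ ℕ) (h : ∀ k : ℕ+, e ≠ Finsupp.single k 1) : S e = 0 := by
  rw [S_eq]
  simp only []
  exact Finset.sum_eq_zero fun k _ => Efam_app_eq_zero k e (h k)

lemma S_zero : S 0 = 0 :=
  Sapp2 0 fun k hc => one_ne_zero (Finsupp.single_eq_zero.mp hc.symm)

/-! ### Möbius sums over divisors -/

lemma moebius_sum (n : ℕ) (hn : n ≠ 0) :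
    ∑ d ∈ n.divisors, ((ArithmeticFunction.moebius d : ℤ) : ℚ)
      = if n = 1 then 1 else 0 := by
  have h2 : ∑ d ∈ n.divisors, (ArithmeticFunction.moebius d : ℤ)
      = if n = 1 then 1 else 0 := by
    have h := ArithmeticFunction.coe_mul_zeta_apply
      (f := ArithmeticFunction.moebius) (x := n)
    rw [ArithmeticFunction.moebius_mul_coe_zeta] at h
    rw [← h, ArithmeticFunction.one_apply]
  calc ∑ d ∈ n.divisors, ((ArithmeticFunction.moebius d : ℤ) : ℚ)
      = ((∑ d ∈ n.divisors, (ArithmeticFunction.moebius d : ℤ) : ℤ) : ℚ) := by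
        push_cast; rfl
    _ = ((if n = 1 then (1 : ℤ) else 0 : ℤ) : ℚ) := by rw [h2]
    _ = if n = 1 then (1 : ℚ) else 0 := by split_ifs <;> simp

lemma qHasSum_divisors (n : ℕ+) (v : ℕ → ℚ) (t : ℕ+ → ℚ)
    (ht : ∀ k : ℕ+, t k = if (k : ℕ) ∣ (n : ℕ) then v (k : ℕ) else 0) :
    qHasSum t (∑ d ∈ (n : ℕ).divisors, v d) := by
  letI : TopologicalSpace ℚ := ⊥
  set w : ℕ → ℚ := fun d => if 0 < d ∧ d ∣ (n : ℕ) then v d else 0 with hw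
  have hcomp : t = w ∘ (fun k : ℕ+ => (k : ℕ)) := by
    funext k
    rw [ht]
    simp only [hw, Function.comp]
    by_cases hd : (k : ℕ) ∣ (n : ℕ)
    · rw [if_pos hd, if_pos ⟨k.pos, hd⟩]
    · rw [if_neg hd, if_neg (fun hc => hd hc.2)]
  have hzero : ∀ x ∉ Set.range (fun k : ℕ+ => (k : ℕ)), w x = 0 := by
    intro x hx
    have hx0 : x = 0 := by
      by_contra h0
      exact hx ⟨⟨x, Nat.pos_of_ne_zero h0⟩, rfl⟩
    simp [hw, hx0]
  have hws : HasSum w (∑ d ∈ (n : ℕ).divisors, w d) := by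
    refine hasSum_sum_of_ne_finset_zero fun d hd => ?_
    rw [hw]
    simp only []
    rw [if_neg]
    rintro ⟨hd1, hd2⟩
    exact hd (Nat.mem_divisors.mpr ⟨hd2, n.pos.ne'⟩)
  have hsum : ∑ d ∈ (n : ℕ).divisors, w d = ∑ d ∈ (n : ℕ).divisors, v d := by
    refine Finset.sum_congr rfl fun d hd => ?_
    obtain ⟨hdvd, hne⟩ := Nat.mem_divisors.mp hd
    have hpos : 0 < d := by
      rcases Nat.eq_zero_or_pos d with rfl | h
      · exact absurd (zero_dvd_iff.mp hdvd) hne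
      · exact h
    rw [hw]
    simp only []
    rw [if_pos ⟨hpos, hdvd⟩]
  rw [hcomp, ← hsum]
  exact (PNat.coe_injective.hasSum_iff hzero).mpr hws

/-! ### main has-sum computations -/

lemma aux_div (A C x y : ℚ) (hx : x ≠ 0) (hy : y ≠ 0) :
    x⁻¹ * (A / y * C) = A / (x * y) * C := by
  field_simp

lemma aux_div2 (A x y : ℚ) (hx : x ≠ 0) (hy : y ≠ 0) :
    A / x * y⁻¹ = A / (x * y) := by
  field_simp

lemma pnat_cast_ne_zero (k : ℕ+) : ((k : ℚ)) ≠ 0 := by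
  have : ((k : ℕ) : ℚ) ≠ 0 := Nat.cast_ne_zero.mpr k.pos.ne'
  exact_mod_cast this

lemma hasSum_part1 :
    HasSum (fun k : ℕ+ => ((k : ℚ))⁻¹ • psi k L) (mlog1p (MvPowerSeries.X (1 : ℕ+))) := by
  rw [hasSum_iff_coeff]
  intro e
  by_cases he : ∃ (n : ℕ+) (m : ℕ), m ≠ 0 ∧ e = Finsupp.single n m
  · obtain ⟨n, m, hm, rfl⟩ := he
    have hterm : ∀ k : ℕ+, (((k : ℚ))⁻¹ • psi k L) (Finsupp.single n m)
        = if (k : ℕ) ∣ (n : ℕ) then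
            ((ArithmeticFunction.moebius ((n : ℕ) / (k : ℕ)) : ℤ) : ℚ) / (n : ℚ)
              * ((-1 : ℚ) ^ (m - 1) / (m : ℚ))
          else 0 := by
      intro k
      rw [smul_app]
      by_cases hd : k ∣ n
      · obtain ⟨l, rfl⟩ := hd
        have hj : Finsupp.single (k * l) m
            = Finsupp.mapDomain (fun x : ℕ+ => k * x) (Finsupp.single l m) :=
          (jmap_single k l m).symm
        rw [hj, psi_apply_j, Lapp1 l m hm]
        have hdvd : (k : ℕ) ∣ (((k * l) : ℕ+) : ℕ) := by
          rw [PNat.mul_coe]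
          exact Dvd.intro _ rfl
        rw [if_pos hdvd]
        have hq : (((k * l) : ℕ+) : ℕ) / (k : ℕ) = (l : ℕ) := by
          rw [PNat.mul_coe]
          exact Nat.mul_div_cancel_left _ k.pos
        rw [hq]
        have hcast : (((k * l) : ℕ+) : ℚ) = (k : ℚ) * (l : ℚ) := by push_cast; ring
        rw [hcast]
        have hk0 : ((k : ℚ)) ≠ 0 := pnat_cast_ne_zero k
        have hl0 : ((l : ℚ)) ≠ 0 := pnat_cast_ne_zero l
        exact aux_div _ _ _ _ hk0 hl0
      · have hnr : ¬∃ e', Finsupp.mapDomain (fun x : ℕ+ => k * x) e' = Finsupp.single n m := by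
          rintro ⟨e', he'⟩
          obtain ⟨l, hl, -⟩ := jmap_single_preimage hm he'
          exact hd ⟨l, hl.symm⟩
        rw [psi_apply_of_not _ _ _ hnr, mul_zero,
          if_neg fun hc => hd (PNat.dvd_iff.mpr hc)]
    have hsum := qHasSum_divisors n
      (fun d => ((ArithmeticFunction.moebius ((n : ℕ) / d) : ℤ) : ℚ) / (n : ℚ)
        * ((-1 : ℚ) ^ (m - 1) / (m : ℚ))) _ hterm
    have hval : ∑ d ∈ (n : ℕ).divisors,
        ((ArithmeticFunction.moebius ((n : ℕ) / d) : ℤ) : ℚ) / (n : ℚ)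
          * ((-1 : ℚ) ^ (m - 1) / (m : ℚ))
        = (if (n : ℕ) = 1 then 1 else 0) / (n : ℚ) * ((-1 : ℚ) ^ (m - 1) / (m : ℚ)) := by
      rw [← Finset.sum_mul, ← Finset.sum_div]
      congr 2
      rw [Nat.sum_div_divisors (n : ℕ) (fun d => ((ArithmeticFunction.moebius d : ℤ) : ℚ))]
      exact moebius_sum (n : ℕ) n.pos.ne'
    rw [hval] at hsum
    have hG : mlog1p (MvPowerSeries.X (1 : ℕ+)) (Finsupp.single n m)
        = (if (n : ℕ) = 1 then 1 else 0) / (n : ℚ) * ((-1 : ℚ) ^ (m - 1) / (m : ℚ)) := by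
      by_cases hn : n = 1
      · subst hn
        rw [Mlem1 1 m hm, if_pos PNat.one_coe]
        have h1 : ((1 : ℕ+) : ℚ) = 1 := by norm_cast
        rw [h1]
        ring
      · rw [Mlem2]
        · rw [if_neg fun hc => hn (PNat.coe_eq_one_iff.mp hc), zero_div, zero_mul]
        · intro m' hc
          rcases (Finsupp.single_eq_single_iff _ _ _ _).mp hc with ⟨h1, -⟩ | ⟨h1, -⟩
          · exact hn h1
          · exact hm h1
    rw [hG]
    exact hsum
  · have hzero : ∀ k : ℕ+, (((k : ℚ))⁻¹ • psi k L) e = 0 := by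
      intro k
      rw [smul_app]
      by_cases hex : ∃ e', Finsupp.mapDomain (fun x : ℕ+ => k * x) e' = e
      · obtain ⟨e', rfl⟩ := hex
        rw [psi_apply_j, Lapp2, mul_zero]
        intro n' m' hm' hc
        exact he ⟨k * n', m', hm', by rw [hc, jmap_single]⟩
      · rw [psi_apply_of_not _ _ _ hex, mul_zero]
    have hG0 : mlog1p (MvPowerSeries.X (1 : ℕ+)) e = 0 :=
      Mzero 1 e fun m' hm' hc => he ⟨1, m', hm', hc⟩
    have hfun : (fun k : ℕ+ => (((k : ℚ))⁻¹ • psi k L) e) = fun _ => (0 : ℚ) := funext hzero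
    rw [hfun, hG0]
    letI : TopologicalSpace ℚ := ⊥
    exact hasSum_zero

lemma part2_fun :
    (fun l : ℕ+ =>
        (((ArithmeticFunction.moebius (l : ℕ) : ℤ) : ℚ) / (l : ℚ)) • mlog1p (psi l E - 1))
      = fun l : ℕ+ =>
        (((ArithmeticFunction.moebius (l : ℕ) : ℤ) : ℚ) / (l : ℚ)) • psi l S := by
  funext l
  congr 1
  have h1 : psi l E = mexp (psi l S) := by
    rw [show E = mexp S from rfl, psi_mexp l S_zero]
  have h2 : psi l S 0 = 0 := by rw [psi_zero_app, S_zero]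
  rw [h1, mlog1p_mexp h2]

lemma hasSum_part2 :
    HasSum (fun l : ℕ+ =>
        (((ArithmeticFunction.moebius (l : ℕ) : ℤ) : ℚ) / (l : ℚ)) • psi l S)
      (MvPowerSeries.X (1 : ℕ+)) := by
  rw [hasSum_iff_coeff]
  intro e
  by_cases he : ∃ n : ℕ+, e = Finsupp.single n 1
  · obtain ⟨n, rfl⟩ := he
    have hterm : ∀ l : ℕ+,
        ((((ArithmeticFunction.moebius (l : ℕ) : ℤ) : ℚ) / (l : ℚ)) • psi l S)
            (Finsupp.single n 1)
        = if (l : ℕ) ∣ (n : ℕ) then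
            ((ArithmeticFunction.moebius (l : ℕ) : ℤ) : ℚ) / (n : ℚ) else 0 := by
      intro l
      rw [smul_app]
      by_cases hd : l ∣ n
      · obtain ⟨l', rfl⟩ := hd
        have hj : Finsupp.single (l * l') 1
            = Finsupp.mapDomain (fun x : ℕ+ => l * x) (Finsupp.single l' 1) :=
          (jmap_single l l' 1).symm
        rw [hj, psi_apply_j, Sapp1]
        have hdvd : (l : ℕ) ∣ (((l * l') : ℕ+) : ℕ) := by
          rw [PNat.mul_coe]
          exact Dvd.intro _ rfl
        rw [if_pos hdvd]
        have hcast : (((l * l') : ℕ+) : ℚ) = (l : ℚ) * (l' : ℚ) := by push_cast; ring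
        rw [hcast]
        have hk0 : ((l : ℚ)) ≠ 0 := pnat_cast_ne_zero l
        have hl0 : ((l' : ℚ)) ≠ 0 := pnat_cast_ne_zero l'
        exact aux_div2 _ _ _ hk0 hl0
      · have hnr : ¬∃ e', Finsupp.mapDomain (fun x : ℕ+ => l * x) e' = Finsupp.single n 1 := by
          rintro ⟨e', he'⟩
          obtain ⟨l'', hl, -⟩ := jmap_single_preimage one_ne_zero he'
          exact hd ⟨l'', hl.symm⟩
        rw [psi_apply_of_not _ _ _ hnr, mul_zero,
          if_neg fun hc => hd (PNat.dvd_iff.mpr hc)]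
    have hsum := qHasSum_divisors n
      (fun d => ((ArithmeticFunction.moebius d : ℤ) : ℚ) / (n : ℚ)) _ hterm
    have hval : ∑ d ∈ (n : ℕ).divisors,
        ((ArithmeticFunction.moebius d : ℤ) : ℚ) / (n : ℚ)
        = (if (n : ℕ) = 1 then 1 else 0) / (n : ℚ) := by
      rw [← Finset.sum_div, moebius_sum (n : ℕ) n.pos.ne']
    rw [hval] at hsum
    have hX : (MvPowerSeries.X (1 : ℕ+) : R) (Finsupp.single n 1)
        = (if (n : ℕ) = 1 then 1 else 0) / (n : ℚ) := by
      rw [X_app]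
      by_cases hn : n = 1
      · subst hn
        rw [if_pos rfl, if_pos PNat.one_coe]
        have h1 : ((1 : ℕ+) : ℚ) = 1 := by norm_cast
        rw [h1]
        norm_num
      · rw [if_neg, if_neg fun hc => hn (PNat.coe_eq_one_iff.mp hc), zero_div]
        intro hc
        rcases (Finsupp.single_eq_single_iff _ _ _ _).mp hc with ⟨h1, -⟩ | ⟨h1, -⟩
        · exact hn h1
        · exact one_ne_zero h1
    rw [hX]
    exact hsum
  · have hzero : ∀ l : ℕ+,
        ((((ArithmeticFunction.moebius (l : ℕ) : ℤ) : ℚ) / (l : ℚ)) • psi l S) e = 0 := by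
      intro l
      rw [smul_app]
      by_cases hex : ∃ e', Finsupp.mapDomain (fun x : ℕ+ => l * x) e' = e
      · obtain ⟨e', rfl⟩ := hex
        rw [psi_apply_j, Sapp2, mul_zero]
        intro k hc
        exact he ⟨l * k, by rw [hc, jmap_single]⟩
      · rw [psi_apply_of_not _ _ _ hex, mul_zero]
    have hX0 : (MvPowerSeries.X (1 : ℕ+) : R) e = 0 := by
      rw [X_app, if_neg fun hc => he ⟨1, hc⟩]
    have hfun : (fun l : ℕ+ =>
        ((((ArithmeticFunction.moebius (l : ℕ) : ℤ) : ℚ) / (l : ℚ)) • psi l S) e)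
        = fun _ => (0 : ℚ) := funext hzero
    rw [hfun, hX0]
    letI : TopologicalSpace ℚ := ⊥
    exact hasSum_zero

/-- Plethystic identities `(E−1) ∘ L = h₁ = L ∘ (E−1)` under `p_m ↦ X_m`. -/
theorem statement :
    Summable Lfam ∧ Summable Efam ∧
    (Summable (fun k : ℕ+ => ((k : ℚ))⁻¹ • psi k L) ∧
      mexp (∑' k : ℕ+, ((k : ℚ))⁻¹ • psi k L) = 1 + MvPowerSeries.X 1) ∧
    (Summable (fun l : ℕ+ =>
        (((ArithmeticFunction.moebius (l : ℕ) : ℤ) : ℚ) / (l : ℚ)) • mlog1p (psi l E - 1)) ∧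
      (∑' l : ℕ+,
        (((ArithmeticFunction.moebius (l : ℕ) : ℤ) : ℚ) / (l : ℚ)) • mlog1p (psi l E - 1)) =
        MvPowerSeries.X 1) := by
  refine ⟨⟨_, hasSum_Lfam⟩, ⟨_, hasSum_Efam⟩, ⟨⟨_, hasSum_part1⟩, ?_⟩, ?_, ?_⟩
  · rw [hasSum_part1.tsum_eq]
    exact mexp_mlog1p (X_app_zero 1)
  · rw [part2_fun]
    exact ⟨_, hasSum_part2⟩
  · rw [part2_fun, hasSum_part2.tsum_eq]

end Stmt0
end
end

section
/- Let x, y ∈ R with y having zero constant coefficient. Then exp( Σ_{k≥1} (1/k)·ψ_k( x · Σ_{l≥1} (μ(l)/l)·log(1+ψ_l(y)) ) ) = ∏_{n≥1} exp( ( (1/n)·Σ_{d∣n} μ(n/d)·ψ_d(x) ) · log(1+ψ_n(y)) ), where all indicated families are summable and the infinite product converges in the coefficientwise topology (the n-th factor differs from 1 only in monomials involving variables X_m with m ≥ n). (Under the identification p_m ↦ X_m this is the plethystic identity Exp(x·Log(1+y)) = ∏_{n≥1} (1+ψ_n(y))^{(1/n)Σ_{d∣n} μ(n/d) ψ_d(x)},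 where Exp and Log are the plethystic exponential and logarithm.) -/
/-!
Let `R` be the ring of formal power series over `ℚ` in countably many variables
`X₁, X₂, …` indexed by the positive integers, with the topology of coefficientwise
convergence.  `exp`, `log(1+·)` and the Adams operations `ψ_k` are as described in
the context.

Statement: for `x, y ∈ R` with `y` having zero constant coefficient,
`exp ( Σ_{k≥1} (1/k)·ψ_k ( x · Σ_{l≥1} (μ(l)/l)·log(1+ψ_l(y)) ) )
  = ∏_{n≥1} exp ( ((1/n)·Σ_{d∣n} μ(n/d)·ψ_d(x)) · log(1+ψ_n(y)) )`,
all indicated families being summable, and the infinite product convergent, in the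
coefficientwise topology.
-/

noncomputable section

open scoped Classical

namespace Stmt1

/-- The coefficientwise topology on the big power series ring: the product topology,
with the discrete topology on each (rational) coefficient. -/
instance : TopologicalSpace (MvPowerSeries ℕ+ ℚ) :=
  @Pi.topologicalSpace (ℕ+ →₀ ℕ) (fun _ => ℚ) (fun _ => ⊥)

abbrev R : Type := MvPowerSeries ℕ+ ℚ

/-- `exp f = Σ_{n ≥ 0} fⁿ/n!` (intended for `f` with zero constant coefficient,
where the sum is coefficientwise finite). -/
def mexp (f : R) : R := ∑' n : ℕ, ((n.factorial : ℚ))⁻¹ • f ^ n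

/-- `log (1 + f) = Σ_{n ≥ 1} (−1)^{n+1} fⁿ / n` (intended for `f` with zero constant
coefficient, where the sum is coefficientwise finite). -/
def mlog1p (f : R) : R := ∑' n : ℕ, ((-1 : ℚ) ^ n / (n + 1)) • f ^ (n + 1)

/-- The `k`-th Adams operation `ψ_k`: the relabelling of monomials induced by
`X_m ↦ X_{k·m}` for all `m ≥ 1`.  (It is the continuous `ℚ`-algebra endomorphism
determined by `ψ_k (X_m) = X_{k m}`.) -/
def psi (k : ℕ+) (f : R) : R := fun e =>
  if h : ∃ e' : ℕ+ →₀ ℕ, Finsupp.mapDomain (fun m : ℕ+ => k * m) e' = e then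
    MvPowerSeries.coeff h.choose f
  else 0

/-- The summand `(μ(l)/l)·log(1+ψ_l(y))`. -/
def logFam (y : R) (l : ℕ+) : R :=
  (((ArithmeticFunction.moebius (l : ℕ) : ℤ) : ℚ) / (l : ℚ)) • mlog1p (psi l y)

/-- The summand `(1/k)·ψ_k ( x · Σ_{l≥1} (μ(l)/l)·log(1+ψ_l(y)) )`. -/
def expFam (x y : R) (k : ℕ+) : R :=
  ((k : ℚ))⁻¹ • psi k (x * ∑' l : ℕ+, logFam y l)

/-- The `n`-th factor of the infinite product:
`exp ( ((1/n)·Σ_{d∣n} μ(n/d)·ψ_d(x)) · log(1+ψ_n(y)) )`,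
i.e. `(1+ψ_n(y))^{(1/n)·Σ_{d∣n} μ(n/d)·ψ_d(x)}` interpreted via the binomial series. -/
def prodFam (x y : R) (n : ℕ+) : R :=
  mexp ((((n : ℚ))⁻¹ •
      ∑ d ∈ (n : ℕ).divisors.attach,
        ((ArithmeticFunction.moebius ((n : ℕ) / (d : ℕ)) : ℤ) : ℚ) •
          psi ⟨(d : ℕ), Nat.pos_of_mem_divisors d.2⟩ x) *
    mlog1p (psi n y))


theorem qdisc : @DiscreteTopology ℚ ⊥ := @DiscreteTopology.mk ℚ ⊥ rfl

instance : T2Space R :=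
  @Pi.t2Space (ℕ+ →₀ ℕ) (fun _ => ℚ) (fun _ => ⊥) (fun _ => @DiscreteTopology.toT2Space ℚ ⊥ qdisc)

theorem sum_apply' {ι : Type*} (F : ι → R) (T : Finset ι) (e : ℕ+ →₀ ℕ) :
    (∑ i ∈ T, F i) e = ∑ i ∈ T, F i e :=
  map_sum (MvPowerSeries.coeff e) F T

theorem hasSum_iff_coeff {ι : Type*} {F : ι → R} {G : R} :
    HasSum F G ↔ ∀ e, ∀ᶠ T in Filter.atTop, (∑ i ∈ T, F i) e = G e := by
  constructor
  · intro h e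
    have h2 := (@tendsto_pi_nhds (Finset ι) (ℕ+ →₀ ℕ) (fun _ => ℚ) (fun _ => ⊥)
        (fun T => ∑ i ∈ T, F i) G Filter.atTop).mp h e
    rw [@nhds_discrete ℚ ⊥ qdisc] at h2
    exact Filter.tendsto_pure.mp h2
  · intro h
    refine (@tendsto_pi_nhds (Finset ι) (ℕ+ →₀ ℕ) (fun _ => ℚ) (fun _ => ⊥)
        (fun T => ∑ i ∈ T, F i) G Filter.atTop).mpr fun e => ?_
    rw [@nhds_discrete ℚ ⊥ qdisc]
    exact Filter.tendsto_pure.mpr (h e)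

theorem hasProd_iff_coeff {F : ℕ+ → R} {G : R} :
    HasProd F G ↔ ∀ e, ∀ᶠ T in Filter.atTop, (∏ i ∈ T, F i) e = G e := by
  have hdef : HasProd F G ↔ Filter.Tendsto (fun T => ∏ i ∈ T, F i) Filter.atTop (nhds G) :=
    Iff.rfl
  rw [hdef]
  constructor
  · intro h e
    have h2 := (@tendsto_pi_nhds (Finset ℕ+) (ℕ+ →₀ ℕ) (fun _ => ℚ) (fun _ => ⊥)
        (fun T => ((∏ i ∈ T, F i : R) : (ℕ+ →₀ ℕ) → ℚ)) G Filter.atTop).mp h e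
    rw [@nhds_discrete ℚ ⊥ qdisc] at h2
    exact Filter.tendsto_pure.mp h2
  · intro h
    refine (@tendsto_pi_nhds (Finset ℕ+) (ℕ+ →₀ ℕ) (fun _ => ℚ) (fun _ => ⊥)
        (fun T => ((∏ i ∈ T, F i : R) : (ℕ+ →₀ ℕ) → ℚ)) G Filter.atTop).mpr fun e => ?_
    rw [@nhds_discrete ℚ ⊥ qdisc]
    exact Filter.tendsto_pure.mpr (h e)

theorem hasSum_of_coeff {ι : Type*} (F : ι → R) (s : (ℕ+ →₀ ℕ) → Finset ι)
    (h : ∀ e, ∀ i ∉ s e, F i e = 0) :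
    HasSum F (fun e => ∑ i ∈ s e, F i e) := by
  refine hasSum_iff_coeff.mpr ?_
  intro e
  refine Filter.eventually_atTop.2 ⟨s e, fun T hT => ?_⟩
  rw [sum_apply']
  exact (Finset.sum_subset hT (fun i _ hi => h e i hi)).symm

theorem coeff_of_hasSum {ι : Type*} {F : ι → R} {G : R} (h : HasSum F G) (e : ℕ+ →₀ ℕ)
    (s : Finset ι) (hs : ∀ i ∉ s, F i e = 0) : G e = ∑ i ∈ s, F i e := by
  obtain ⟨t, ht⟩ := Filter.eventually_atTop.1 (hasSum_iff_coeff.1 h e)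
  have h1 := ht (s ∪ t) Finset.subset_union_right
  rw [sum_apply'] at h1
  rw [← h1]
  exact (Finset.sum_subset Finset.subset_union_left (fun i _ hi => hs i hi)).symm



/-! ### psi basics -/

theorem capp (e : ℕ+ →₀ ℕ) (f : R) : MvPowerSeries.coeff e f = f e := rfl

theorem one_apply (d : ℕ+ →₀ ℕ) : (1 : R) d = if d = 0 then 1 else 0 :=
  MvPowerSeries.coeff_one d

theorem mul_apply (f g : R) (d : ℕ+ →₀ ℕ) :
    (f * g) d = ∑ p ∈ Finset.HasAntidiagonal.antidiagonal d, f p.1 * g p.2 :=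
  MvPowerSeries.coeff_mul d f g

theorem mulk_inj (k : ℕ+) : Function.Injective (fun m : ℕ+ => k * m) :=
  fun _ _ h => mul_left_cancel h

def Pdvd (k : ℕ+) (e : ℕ+ →₀ ℕ) : Prop := ∀ m ∈ e.support, k ∣ m

def pull (k : ℕ+) (e : ℕ+ →₀ ℕ) : ℕ+ →₀ ℕ :=
  Finsupp.comapDomain (fun m : ℕ+ => k * m) e ((mulk_inj k).injOn)

theorem pull_apply (k : ℕ+) (e : ℕ+ →₀ ℕ) (m : ℕ+) : pull k e m = e (k * m) := rfl

theorem mapDomain_pull {k : ℕ+} {e : ℕ+ →₀ ℕ} (h : Pdvd k e) :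
    Finsupp.mapDomain (fun m : ℕ+ => k * m) (pull k e) = e := by
  refine Finsupp.mapDomain_comapDomain _ (mulk_inj k) e ?_
  intro m hm
  obtain ⟨c, hc⟩ := h m hm
  exact ⟨c, hc.symm⟩

theorem pull_mapDomain (k : ℕ+) (e' : ℕ+ →₀ ℕ) :
    pull k (Finsupp.mapDomain (fun m : ℕ+ => k * m) e') = e' := by
  ext m
  rw [pull_apply]
  exact Finsupp.mapDomain_apply (mulk_inj k) e' m

theorem exists_iff_Pdvd {k : ℕ+} {e : ℕ+ →₀ ℕ} :
    (∃ e', Finsupp.mapDomain (fun m : ℕ+ => k * m) e' = e) ↔ Pdvd k e := by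
  constructor
  · rintro ⟨e', rfl⟩ m hm
    obtain ⟨m', _, rfl⟩ := Finset.mem_image.1 (Finsupp.mapDomain_support hm)
    exact ⟨m', rfl⟩
  · intro h
    exact ⟨pull k e, mapDomain_pull h⟩

theorem psi_eq (k : ℕ+) (f : R) (e : ℕ+ →₀ ℕ) :
    psi k f e = if Pdvd k e then f (pull k e) else 0 := by
  unfold psi
  by_cases h : ∃ e', Finsupp.mapDomain (fun m : ℕ+ => k * m) e' = e
  · rw [dif_pos h, if_pos (exists_iff_Pdvd.1 h)]
    have h1 : Finsupp.mapDomain (fun m : ℕ+ => k * m) h.choose = e := h.choose_spec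
    have h2 : h.choose = pull k e :=
      (pull_mapDomain k h.choose).symm.trans (congrArg (pull k) h1)
    exact h2 ▸ capp h.choose f
  · rw [dif_neg h, if_neg (fun hp => h (exists_iff_Pdvd.2 hp))]

theorem Pdvd_zero (k : ℕ+) : Pdvd k 0 := by intro m hm; simp at hm

theorem Pdvd_add {k : ℕ+} {a b : ℕ+ →₀ ℕ} (ha : Pdvd k a) (hb : Pdvd k b) :
    Pdvd k (a + b) := by
  intro m hm
  rcases Finset.mem_union.1 (Finsupp.support_add hm) with h | h
  · exact ha m h
  · exact hb m h

theorem mem_support_add_left {a b : ℕ+ →₀ ℕ} {m : ℕ+} (hm : m ∈ a.support) :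
    m ∈ (a + b).support := by
  rw [Finsupp.mem_support_iff] at hm ⊢
  rw [Finsupp.add_apply]
  omega

theorem mem_support_add_right {a b : ℕ+ →₀ ℕ} {m : ℕ+} (hm : m ∈ b.support) :
    m ∈ (a + b).support := by
  rw [Finsupp.mem_support_iff] at hm ⊢
  rw [Finsupp.add_apply]
  omega

theorem Pdvd_of_add_left {k : ℕ+} {a b : ℕ+ →₀ ℕ} (h : Pdvd k (a + b)) : Pdvd k a :=
  fun m hm => h m (mem_support_add_left hm)

theorem Pdvd_of_add_right {k : ℕ+} {a b : ℕ+ →₀ ℕ} (h : Pdvd k (a + b)) : Pdvd k b :=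
  fun m hm => h m (mem_support_add_right hm)

theorem pull_add (k : ℕ+) (a b : ℕ+ →₀ ℕ) : pull k (a + b) = pull k a + pull k b := by
  ext m
  rw [Finsupp.add_apply, pull_apply, pull_apply, pull_apply, Finsupp.add_apply]

theorem pull_zero (k : ℕ+) : pull k 0 = 0 := by
  ext m; rw [pull_apply]; rfl

theorem pull_eq_zero_iff {k : ℕ+} {e : ℕ+ →₀ ℕ} (h : Pdvd k e) :
    pull k e = 0 ↔ e = 0 := by
  constructor
  · intro h0
    rw [← mapDomain_pull h, h0, Finsupp.mapDomain_zero]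
  · rintro rfl; exact pull_zero k

/-! ### psi is a ring homomorphism -/

theorem psi_add (k : ℕ+) (f g : R) : psi k (f + g) = psi k f + psi k g := by
  refine MvPowerSeries.ext fun e => ?_
  rw [map_add, capp, capp, capp, psi_eq k (f + g) e, psi_eq k f e, psi_eq k g e]
  split
  · rfl
  · rw [add_zero]

theorem psi_smul (k : ℕ+) (c : ℚ) (f : R) : psi k (c • f) = c • psi k f := by
  refine MvPowerSeries.ext fun e => ?_
  rw [map_smul, capp, capp, psi_eq k (c • f) e, psi_eq k f e]
  rw [smul_eq_mul]
  split
  · rfl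
  · rw [mul_zero]

theorem psi_one (k : ℕ+) : psi k (1 : R) = 1 := by
  refine MvPowerSeries.ext fun e => ?_
  rw [capp, psi_eq k 1 e, MvPowerSeries.coeff_one]
  by_cases h : Pdvd k e
  · rw [if_pos h, one_apply]
    by_cases h0 : e = 0
    · rw [if_pos ((pull_eq_zero_iff h).2 h0), if_pos h0]
    · rw [if_neg (fun hh => h0 ((pull_eq_zero_iff h).1 hh)), if_neg h0]
  · rw [if_neg h, if_neg]
    rintro rfl
    exact h (Pdvd_zero k)

theorem psi_mul (k : ℕ+) (f g : R) : psi k (f * g) = psi k f * psi k g := by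
  refine MvPowerSeries.ext fun e => ?_
  rw [MvPowerSeries.coeff_mul, capp, psi_eq k (f * g) e]
  by_cases h : Pdvd k e
  · rw [if_pos h, mul_apply]
    refine (Finset.sum_bij' (fun p (_ : p ∈ Finset.HasAntidiagonal.antidiagonal (pull k e)) =>
        (Finsupp.mapDomain (fun m : ℕ+ => k * m) p.1,
         Finsupp.mapDomain (fun m : ℕ+ => k * m) p.2))
      (fun p (_ : p ∈ Finset.HasAntidiagonal.antidiagonal e) => (pull k p.1, pull k p.2)) ?_ ?_ ?_ ?_ ?_)
    · intro p hp
      rw [Finset.HasAntidiagonal.mem_antidiagonal] at hp ⊢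
      rw [← Finsupp.mapDomain_add, hp, mapDomain_pull h]
    · intro p hp
      rw [Finset.HasAntidiagonal.mem_antidiagonal] at hp ⊢
      rw [← pull_add, hp]
    · intro p hp
      exact Prod.ext (pull_mapDomain k p.1) (pull_mapDomain k p.2)
    · intro p hp
      rw [Finset.HasAntidiagonal.mem_antidiagonal] at hp
      have h1 : Pdvd k p.1 := Pdvd_of_add_left (hp ▸ h)
      have h2 : Pdvd k p.2 := Pdvd_of_add_right (hp ▸ h)
      exact Prod.ext (mapDomain_pull h1) (mapDomain_pull h2)
    · intro p hp
      have e1 : psi k f (Finsupp.mapDomain (fun m : ℕ+ => k * m) p.1) = f p.1 := by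
        rw [psi_eq, if_pos (exists_iff_Pdvd.1 ⟨p.1, rfl⟩), pull_mapDomain]
      have e2 : psi k g (Finsupp.mapDomain (fun m : ℕ+ => k * m) p.2) = g p.2 := by
        rw [psi_eq, if_pos (exists_iff_Pdvd.1 ⟨p.2, rfl⟩), pull_mapDomain]
      rw [capp, capp, e1, e2]
  · rw [if_neg h]
    refine (Finset.sum_eq_zero fun p hp => ?_).symm
    rw [Finset.HasAntidiagonal.mem_antidiagonal] at hp
    rw [capp, capp, psi_eq k f p.1, psi_eq k g p.2]
    by_cases h1 : Pdvd k p.1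
    · by_cases h2 : Pdvd k p.2
      · exact absurd (hp ▸ Pdvd_add h1 h2) h
      · rw [if_neg h2, mul_zero]
    · rw [if_neg h1, zero_mul]

theorem psi_pow (k : ℕ+) (f : R) (n : ℕ) : psi k (f ^ n) = psi k f ^ n := by
  induction n with
  | zero => rw [pow_zero, pow_zero, psi_one]
  | succ n ih => rw [pow_succ, pow_succ, psi_mul, ih]

theorem pull_pull (k l : ℕ+) (e : ℕ+ →₀ ℕ) : pull l (pull k e) = pull (k * l) e := by
  ext m
  rw [pull_apply, pull_apply, pull_apply, mul_assoc]

theorem Pdvd_mul_iff {k l : ℕ+} {e : ℕ+ →₀ ℕ} :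
    Pdvd (k * l) e ↔ Pdvd k e ∧ Pdvd l (pull k e) := by
  constructor
  · intro h
    refine ⟨fun m hm => dvd_trans (Dvd.intro l rfl) (h m hm), fun m hm => ?_⟩
    have hk : k * m ∈ e.support := by
      rw [Finsupp.mem_support_iff] at hm ⊢
      rwa [pull_apply] at hm
    obtain ⟨c, hc⟩ := h (k * m) hk
    refine ⟨c, ?_⟩
    have : k * m = k * (l * c) := by rw [hc]; ring
    exact mul_left_cancel this
  · rintro ⟨h1, h2⟩ m hm
    obtain ⟨m', rfl⟩ := h1 m hm
    have hm' : m' ∈ (pull k e).support := by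
      rw [Finsupp.mem_support_iff, pull_apply]
      rwa [Finsupp.mem_support_iff] at hm
    obtain ⟨c, hc⟩ := h2 m' hm'
    exact ⟨c, by rw [hc, mul_assoc]⟩

theorem psi_comp (k l : ℕ+) (f : R) : psi k (psi l f) = psi (k * l) f := by
  refine MvPowerSeries.ext fun e => ?_
  rw [capp, capp, psi_eq k (psi l f) e, psi_eq (k * l) f e]
  by_cases hk : Pdvd k e
  · rw [if_pos hk, psi_eq l f (pull k e)]
    by_cases hl : Pdvd l (pull k e)
    · rw [if_pos hl, if_pos (Pdvd_mul_iff.2 ⟨hk, hl⟩), pull_pull]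
    · rw [if_neg hl, if_neg (fun h => hl (Pdvd_mul_iff.1 h).2)]
  · rw [if_neg hk, if_neg (fun h => hk (Pdvd_mul_iff.1 h).1)]

theorem cc_psi (k : ℕ+) (f : R) : psi k f 0 = f 0 := by
  rw [psi_eq, if_pos (Pdvd_zero k), pull_zero]



/-! ### degrees and vanishing of coefficients of powers -/

def deg (e : ℕ+ →₀ ℕ) : ℕ := e.sum fun _ n => n

theorem deg_add (a b : ℕ+ →₀ ℕ) : deg (a + b) = deg a + deg b :=
  Finsupp.sum_add_index' (fun _ => rfl) (fun _ _ _ => rfl)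

theorem deg_pos {e : ℕ+ →₀ ℕ} (h : e ≠ 0) : 0 < deg e := by
  obtain ⟨a, ha⟩ : ∃ a, e a ≠ 0 := by
    by_contra hc
    push_neg at hc
    exact h (Finsupp.ext fun a => hc a)
  calc 0 < e a := Nat.pos_of_ne_zero ha
    _ ≤ deg e :=
      Finset.single_le_sum (f := fun m => e m) (fun _ _ => Nat.zero_le _)
        (Finsupp.mem_support_iff.2 ha)

theorem smul_apply' (c : ℚ) (f : R) (e : ℕ+ →₀ ℕ) : (c • f) e = c * f e :=
  map_smul (MvPowerSeries.coeff e) c f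

theorem zero_apply (e : ℕ+ →₀ ℕ) : (0 : R) e = 0 := rfl

theorem nsmul_apply (n : ℕ) (f : R) (e : ℕ+ →₀ ℕ) : (n • f) e = (n : ℚ) * f e :=
  (map_nsmul (MvPowerSeries.coeff e) n f).trans (nsmul_eq_mul _ _)

theorem coeff_pow_eq_zero {f : R} (hf : f 0 = 0) :
    ∀ n (e : ℕ+ →₀ ℕ), deg e < n → (f ^ n) e = 0 := by
  intro n
  induction n with
  | zero => intro e he; omega
  | succ n ih =>
    intro e he
    rw [pow_succ, mul_apply]
    refine Finset.sum_eq_zero fun p hp => ?_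
    rw [Finset.HasAntidiagonal.mem_antidiagonal] at hp
    by_cases h2 : p.2 = 0
    · rw [h2, hf, mul_zero]
    · have hd : deg p.1 + deg p.2 = deg e := by rw [← deg_add, hp]
      have : deg p.1 < n := by have := deg_pos h2; omega
      rw [ih p.1 this, zero_mul]

theorem coeff_pow_mul_eq_zero {f g : R} (hf : f 0 = 0) (hg : g 0 = 0) {i j : ℕ}
    {e : ℕ+ →₀ ℕ} (h : deg e < i + j) : (f ^ i * g ^ j) e = 0 := by
  rw [mul_apply]
  refine Finset.sum_eq_zero fun p hp => ?_
  rw [Finset.HasAntidiagonal.mem_antidiagonal] at hp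
  have hd : deg p.1 + deg p.2 = deg e := by rw [← deg_add, hp]
  by_cases h1 : deg p.1 < i
  · rw [coeff_pow_eq_zero hf i p.1 h1, zero_mul]
  · rw [coeff_pow_eq_zero hg j p.2 (by omega), mul_zero]

/-! ### coefficients of the exponential and logarithm series -/

theorem coeff_tsum_pow (c : ℕ → ℚ) (d : ℕ → ℕ) (hd : ∀ n, n ≤ d n) {f : R} (hf : f 0 = 0)
    (e : ℕ+ →₀ ℕ) (N : ℕ) (hN : deg e ≤ N) :
    (∑' n : ℕ, c n • f ^ d n) e = ∑ n ∈ Finset.range (N + 1), c n * (f ^ d n) e := by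
  have hvan : ∀ (e' : ℕ+ →₀ ℕ) n, n ∉ Finset.range (deg e' + 1) → (c n • f ^ d n) e' = 0 := by
    intro e' n hn
    rw [Finset.mem_range] at hn
    rw [smul_apply', coeff_pow_eq_zero hf (d n) e' (by have := hd n; omega), mul_zero]
  have hsum := hasSum_of_coeff (fun n => c n • f ^ d n) (fun e' => Finset.range (deg e' + 1)) hvan
  have h2 : HasSum (fun n => c n • f ^ d n) (∑' n : ℕ, c n • f ^ d n) :=
    hsum.summable.hasSum
  have h3 := coeff_of_hasSum h2 e (Finset.range (N + 1)) (fun n hn => by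
    refine hvan e n (fun hc => hn ?_)
    rw [Finset.mem_range] at hc ⊢
    omega)
  rw [h3]
  exact Finset.sum_congr rfl fun n _ => smul_apply' _ _ _

theorem summable_tsum_pow (c : ℕ → ℚ) (d : ℕ → ℕ) (hd : ∀ n, n ≤ d n) {f : R} (hf : f 0 = 0) :
    Summable (fun n => c n • f ^ d n) := by
  refine (hasSum_of_coeff (fun n => c n • f ^ d n) (fun e' => Finset.range (deg e' + 1))
    ?_).summable
  intro e' n hn
  rw [Finset.mem_range] at hn
  show (c n • f ^ d n) e' = 0
  rw [smul_apply', coeff_pow_eq_zero hf (d n) e' (by have := hd n; omega), mul_zero]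

theorem coeff_mexp {f : R} (hf : f 0 = 0) (e : ℕ+ →₀ ℕ) (N : ℕ) (hN : deg e ≤ N) :
    mexp f e = ∑ n ∈ Finset.range (N + 1), ((n.factorial : ℚ))⁻¹ * (f ^ n) e :=
  coeff_tsum_pow _ id (fun n => le_refl n) hf e N hN

theorem coeff_mlog1p {f : R} (hf : f 0 = 0) (e : ℕ+ →₀ ℕ) (N : ℕ) (hN : deg e ≤ N) :
    mlog1p f e = ∑ n ∈ Finset.range (N + 1), ((-1 : ℚ) ^ n / (n + 1)) * (f ^ (n + 1)) e :=
  coeff_tsum_pow _ (fun n => n + 1) (fun n => Nat.le_succ n) hf e N hN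

theorem cc_mlog1p {f : R} (hf : f 0 = 0) : mlog1p f 0 = 0 := by
  rw [coeff_mlog1p hf 0 0 (le_refl _)]
  rw [show (0 : ℕ) + 1 = 1 from rfl, Finset.sum_range_one, pow_one, hf, mul_zero]

theorem cc_mexp {f : R} (hf : f 0 = 0) : mexp f 0 = 1 := by
  rw [coeff_mexp hf 0 0 (le_refl _)]
  rw [show (0 : ℕ) + 1 = 1 from rfl, Finset.sum_range_one, pow_zero, one_apply, if_pos rfl]
  norm_num

/-! ### mexp of sums -/

theorem mexp_add {f g : R} (hf : f 0 = 0) (hg : g 0 = 0) :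
    mexp (f + g) = mexp f * mexp g := by
  refine MvPowerSeries.ext fun e => ?_
  rw [capp, capp]
  set N := deg e with hNdef
  have hfg : (f + g) 0 = 0 := by
    rw [show (f + g) 0 = f 0 + g 0 from rfl, hf, hg, add_zero]
  rw [coeff_mexp hfg e N (le_refl _), mul_apply]
  -- expand the right-hand side
  have hrhs : ∑ p ∈ Finset.HasAntidiagonal.antidiagonal e, mexp f p.1 * mexp g p.2
      = ∑ p ∈ Finset.range (N + 1) ×ˢ Finset.range (N + 1),
          (((p.1.factorial : ℚ))⁻¹ * ((p.2.factorial : ℚ))⁻¹) * (f ^ p.1 * g ^ p.2) e := by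
    have h1 : ∀ p ∈ Finset.HasAntidiagonal.antidiagonal e, mexp f p.1 * mexp g p.2
        = ∑ q ∈ Finset.range (N + 1) ×ˢ Finset.range (N + 1),
            (((q.1.factorial : ℚ))⁻¹ * ((q.2.factorial : ℚ))⁻¹) *
              ((f ^ q.1) p.1 * (g ^ q.2) p.2) := by
      intro p hp
      rw [Finset.HasAntidiagonal.mem_antidiagonal] at hp
      have hd1 : deg p.1 ≤ N := by
        have : deg p.1 + deg p.2 = N := by rw [← deg_add, hp]
        omega
      have hd2 : deg p.2 ≤ N := by
        have : deg p.1 + deg p.2 = N := by rw [← deg_add, hp]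
        omega
      rw [coeff_mexp hf p.1 N hd1, coeff_mexp hg p.2 N hd2, Finset.sum_mul_sum,
        ← Finset.sum_product']
      refine Finset.sum_congr rfl fun q _ => by ring
    rw [Finset.sum_congr rfl h1, Finset.sum_comm]
    refine Finset.sum_congr rfl fun q _ => ?_
    rw [mul_apply, Finset.mul_sum]
  rw [hrhs,
    ← Finset.sum_filter_of_ne (s := Finset.range (N + 1) ×ˢ Finset.range (N + 1))
      (p := fun q => q.1 + q.2 ≤ N)
      (f := fun q => (((q.1.factorial : ℚ))⁻¹ * ((q.2.factorial : ℚ))⁻¹) * (f ^ q.1 * g ^ q.2) e)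
      (fun q _ hq => by
        by_contra hc
        push_neg at hc
        refine hq ?_
        show (((q.1.factorial : ℚ))⁻¹ * ((q.2.factorial : ℚ))⁻¹) * (f ^ q.1 * g ^ q.2) e = 0
        rw [coeff_pow_mul_eq_zero hf hg (by omega), mul_zero])]
  have hlhs : ∀ n ∈ Finset.range (N + 1), ((n.factorial : ℚ))⁻¹ * ((f + g) ^ n) e
      = ∑ m ∈ Finset.HasAntidiagonal.antidiagonal n,
          (((m.1.factorial : ℚ))⁻¹ * ((m.2.factorial : ℚ))⁻¹) * (f ^ m.1 * g ^ m.2) e := by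
    intro n _
    rw [(Commute.all f g).add_pow', sum_apply',
      Finset.sum_congr rfl (fun (m : ℕ × ℕ) (_ : m ∈ Finset.HasAntidiagonal.antidiagonal n) =>
        nsmul_apply (n.choose m.1) (f ^ m.1 * g ^ m.2) e),
      Finset.mul_sum]
    refine Finset.sum_congr rfl fun m hm => ?_
    rw [Finset.HasAntidiagonal.mem_antidiagonal] at hm
    have hm' : m.2 + m.1 = n := by omega
    have key : n.choose m.1 * m.2.factorial * m.1.factorial = n.factorial := by
      have h0 := Nat.add_choose_mul_factorial_mul_factorial m.2 m.1
      rw [hm'] at h0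
      exact h0
    have h1 : (n.factorial : ℚ) ≠ 0 := by positivity
    have h2 : (m.1.factorial : ℚ) ≠ 0 := by positivity
    have h3 : (m.2.factorial : ℚ) ≠ 0 := by positivity
    have keyq : (n.choose m.1 : ℚ) * (m.2.factorial : ℚ) * (m.1.factorial : ℚ)
        = (n.factorial : ℚ) := by exact_mod_cast congrArg (Nat.cast : ℕ → ℚ) key
    have hsc : ((n.factorial : ℚ))⁻¹ * (n.choose m.1 : ℚ)
        = ((m.1.factorial : ℚ))⁻¹ * ((m.2.factorial : ℚ))⁻¹ := by
      field_simp
      linear_combination keyq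
    linear_combination ((f ^ m.1 * g ^ m.2) e) * hsc
  rw [Finset.sum_congr rfl hlhs, ← Finset.sum_sigma (Finset.range (N + 1))
    (fun n => Finset.HasAntidiagonal.antidiagonal n)
    (fun m => (((m.2.1.factorial : ℚ))⁻¹ * ((m.2.2.factorial : ℚ))⁻¹) * (f ^ m.2.1 * g ^ m.2.2) e)]
  refine Finset.sum_nbij' (fun p => p.2) (fun q => ⟨q.1 + q.2, q⟩) ?_ ?_ ?_ ?_ ?_
  · intro p hp
    rw [Finset.mem_sigma] at hp
    obtain ⟨h1, h2⟩ := hp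
    rw [Finset.mem_range] at h1
    rw [Finset.HasAntidiagonal.mem_antidiagonal] at h2
    simp only [Finset.mem_filter, Finset.mem_product, Finset.mem_range]
    omega
  · intro q hq
    simp only [Finset.mem_filter, Finset.mem_product, Finset.mem_range] at hq
    rw [Finset.mem_sigma]
    refine ⟨?_, ?_⟩
    · show q.1 + q.2 ∈ Finset.range (N + 1)
      rw [Finset.mem_range]
      omega
    · show q ∈ Finset.HasAntidiagonal.antidiagonal (q.1 + q.2)
      rw [Finset.HasAntidiagonal.mem_antidiagonal]
  · intro p hp
    rw [Finset.mem_sigma] at hp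
    obtain ⟨h1, h2⟩ := hp
    rw [Finset.HasAntidiagonal.mem_antidiagonal] at h2
    obtain ⟨n, m⟩ := p
    simp only at h2 ⊢
    subst h2
    rfl
  · intro q hq
    rfl
  · intro p hp
    rfl



theorem mexp_zero : mexp (0 : R) = 1 := by
  refine MvPowerSeries.ext fun e => ?_
  rw [capp, capp, coeff_mexp rfl e (deg e) (le_refl _)]
  rw [Finset.sum_eq_single 0]
  · rw [pow_zero]
    norm_num
  · intro n _ hn
    rw [zero_pow hn, zero_apply, mul_zero]
  · intro h
    exact absurd (Finset.mem_range.2 (by omega)) h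

theorem cc_sum {ι : Type*} (T : Finset ι) (g : ι → R) (h : ∀ i ∈ T, g i 0 = 0) :
    (∑ i ∈ T, g i) 0 = 0 := by
  rw [sum_apply']
  exact Finset.sum_eq_zero h

theorem mexp_sum {ι : Type*} (T : Finset ι) (g : ι → R) (h : ∀ i ∈ T, g i 0 = 0) :
    mexp (∑ i ∈ T, g i) = ∏ i ∈ T, mexp (g i) := by
  classical
  induction T using Finset.induction_on with
  | empty => rw [Finset.sum_empty, Finset.prod_empty, mexp_zero]
  | @insert a T ha ih =>
    rw [Finset.sum_insert ha, Finset.prod_insert ha,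
      mexp_add (h a (Finset.mem_insert_self a T))
        (cc_sum T g (fun i hi => h i (Finset.mem_insert_of_mem hi))),
      ih (fun i hi => h i (Finset.mem_insert_of_mem hi))]

/-! ### transfer of HasSum along psi, smul and left multiplication -/

theorem hasSum_psi {ι : Type*} {F : ι → R} {G : R} (k : ℕ+) (h : HasSum F G) :
    HasSum (fun i => psi k (F i)) (psi k G) := by
  rw [hasSum_iff_coeff] at h ⊢
  intro e
  have hpsi : ∀ T : Finset ι, (∑ i ∈ T, psi k (F i)) e = psi k (∑ i ∈ T, F i) e := by
    intro T
    induction T using Finset.induction_on with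
    | empty =>
      rw [Finset.sum_empty, Finset.sum_empty, psi_eq]
      split <;> simp [zero_apply]
    | @insert a T ha ih =>
      rw [Finset.sum_insert ha, Finset.sum_insert ha, psi_add,
        show ∀ u v : R, (u + v) e = u e + v e from fun _ _ => rfl,
        show ∀ u v : R, (u + v) e = u e + v e from fun _ _ => rfl, ih]
  rw [psi_eq k G e]
  by_cases hd : Pdvd k e
  · rw [if_pos hd]
    filter_upwards [h (pull k e)] with T hT
    rw [hpsi T, psi_eq, if_pos hd, hT]
  · rw [if_neg hd]
    filter_upwards with T
    rw [hpsi T, psi_eq, if_neg hd]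

theorem hasSum_smul {ι : Type*} {F : ι → R} {G : R} (c : ℚ) (h : HasSum F G) :
    HasSum (fun i => c • F i) (c • G) := by
  rw [hasSum_iff_coeff] at h ⊢
  intro e
  filter_upwards [h e] with T hT
  rw [show (∑ i ∈ T, c • F i) = c • ∑ i ∈ T, F i from (Finset.smul_sum).symm,
    smul_apply', hT, smul_apply']

theorem hasSum_mul_left {ι : Type*} {F : ι → R} {G : R} (x : R) (h : HasSum F G) :
    HasSum (fun i => x * F i) (x * G) := by
  rw [hasSum_iff_coeff] at h ⊢
  intro e
  have hall : ∀ᶠ T in Filter.atTop, ∀ p ∈ Finset.HasAntidiagonal.antidiagonal e,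
      (∑ i ∈ T, F i) p.2 = G p.2 := by
    rw [Filter.eventually_all_finset]
    intro p _
    exact h p.2
  filter_upwards [hall] with T hT
  rw [show (∑ i ∈ T, x * F i) = x * ∑ i ∈ T, F i from (Finset.mul_sum _ _ _).symm,
    mul_apply, mul_apply]
  exact Finset.sum_congr rfl fun p hp => by rw [hT p hp]

/-! ### support restrictions -/

def maxv (e : ℕ+ →₀ ℕ) : ℕ+ := e.support.sup fun m => m

theorem le_maxv {e : ℕ+ →₀ ℕ} {m : ℕ+} (h : m ∈ e.support) : m ≤ maxv e :=
  Finset.le_sup (f := fun m => m) h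

theorem maxv_mono {a e : ℕ+ →₀ ℕ} (h : a ≤ e) : maxv a ≤ maxv e := by
  refine Finset.sup_mono fun m hm => ?_
  rw [Finsupp.mem_support_iff] at hm ⊢
  have := (Finsupp.le_def.1 h) m
  omega

theorem mul_supported {k : ℕ+} {f g : R} (hf : ∀ a, ¬Pdvd k a → f a = 0)
    (hg : ∀ b, ¬Pdvd k b → g b = 0) : ∀ e, ¬Pdvd k e → (f * g) e = 0 := by
  intro e he
  rw [mul_apply]
  refine Finset.sum_eq_zero fun p hp => ?_
  rw [Finset.HasAntidiagonal.mem_antidiagonal] at hp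
  by_cases h1 : Pdvd k p.1
  · by_cases h2 : Pdvd k p.2
    · exact absurd (hp ▸ Pdvd_add h1 h2) he
    · rw [hg p.2 h2, mul_zero]
  · rw [hf p.1 h1, zero_mul]

theorem pow_supported {k : ℕ+} {f : R} (hf : ∀ a, ¬Pdvd k a → f a = 0) :
    ∀ (n : ℕ) e, ¬Pdvd k e → (f ^ n) e = 0 := by
  intro n
  induction n with
  | zero =>
    intro e he
    rw [pow_zero, one_apply, if_neg]
    rintro rfl
    exact he (Pdvd_zero k)
  | succ n ih =>
    intro e he
    rw [pow_succ]
    exact mul_supported ih hf e he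

theorem psi_supported (k : ℕ+) (f : R) : ∀ e, ¬Pdvd k e → psi k f e = 0 := by
  intro e he
  rw [psi_eq, if_neg he]

theorem mlog1p_supported {k : ℕ+} {f : R} (hcc : f 0 = 0)
    (hf : ∀ a, ¬Pdvd k a → f a = 0) : ∀ e, ¬Pdvd k e → mlog1p f e = 0 := by
  intro e he
  rw [coeff_mlog1p hcc e (deg e) (le_refl _)]
  refine Finset.sum_eq_zero fun n _ => ?_
  rw [pow_supported hf (n + 1) e he, mul_zero]

theorem smul_supported {k : ℕ+} {c : ℚ} {f : R} (hf : ∀ a, ¬Pdvd k a → f a = 0) :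
    ∀ e, ¬Pdvd k e → (c • f) e = 0 := by
  intro e he
  rw [smul_apply', hf e he, mul_zero]

/-- key vanishing: if `g` has zero constant coefficient and is supported on monomials all of
whose variables are multiples of `d`, and no variable of `e` is a multiple of `d`, then the
`e`-th coefficient of `f * g` vanishes. -/
theorem mul_right_vanish {d : ℕ+} {g : R} (hcc : g 0 = 0)
    (hg : ∀ b, ¬Pdvd d b → g b = 0) (f : R) {e : ℕ+ →₀ ℕ}
    (he : ¬∃ m ∈ e.support, d ∣ m) : (f * g) e = 0 := by
  rw [mul_apply]
  refine Finset.sum_eq_zero fun p hp => ?_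
  rw [Finset.HasAntidiagonal.mem_antidiagonal] at hp
  by_cases h2 : p.2 = 0
  · rw [h2, hcc, mul_zero]
  · by_cases hdvd : Pdvd d p.2
    · obtain ⟨m, hm⟩ : ∃ m, m ∈ p.2.support := by
        by_contra hc
        push_neg at hc
        refine h2 (Finsupp.ext fun a => ?_)
        by_contra ha
        exact hc a (Finsupp.mem_support_iff.2 ha)
      exact absurd ⟨m, hp ▸ mem_support_add_right hm, hdvd m hm⟩ he
    · rw [hg p.2 hdvd, mul_zero]



/-! ### psi commutes with mlog1p -/

theorem psi_mlog1p (k : ℕ+) {f : R} (hcc : f 0 = 0) :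
    psi k (mlog1p f) = mlog1p (psi k f) := by
  have hccp : psi k f 0 = 0 := (cc_psi k f).trans hcc
  have h1 : HasSum (fun n : ℕ => ((-1 : ℚ) ^ n / (n + 1)) • f ^ (n + 1)) (mlog1p f) := by
    rw [mlog1p]
    exact (summable_tsum_pow (fun n => (-1 : ℚ) ^ n / (n + 1)) (fun n => n + 1)
      (fun n => Nat.le_succ n) hcc).hasSum
  have h2 := hasSum_psi k h1
  have h3 : (fun n : ℕ => psi k (((-1 : ℚ) ^ n / (n + 1)) • f ^ (n + 1)))
      = fun n : ℕ => ((-1 : ℚ) ^ n / (n + 1)) • (psi k f) ^ (n + 1) := by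
    funext n
    rw [psi_smul, psi_pow]
  rw [h3] at h2
  have h4 : HasSum (fun n : ℕ => ((-1 : ℚ) ^ n / (n + 1)) • (psi k f) ^ (n + 1))
      (mlog1p (psi k f)) := by
    rw [mlog1p]
    exact (summable_tsum_pow (fun n => (-1 : ℚ) ^ n / (n + 1)) (fun n => n + 1)
      (fun n => Nat.le_succ n) hccp).hasSum
  exact h2.unique h4

/-! ### the building blocks -/

/-- `L_n = log(1 + ψ_n y)`. -/
def Lf (y : R) (n : ℕ+) : R := mlog1p (psi n y)

theorem pq_ne (k : ℕ+) : ((k : ℕ) : ℚ) ≠ 0 := by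
  have := k.pos
  positivity

theorem not_exists_dvd_of_lt {e : ℕ+ →₀ ℕ} {d : ℕ+} (h : maxv e < d) :
    ¬∃ m ∈ e.support, d ∣ m := by
  rintro ⟨m, hm, hdm⟩
  exact absurd ((PNat.le_of_dvd hdm).trans (le_maxv hm)) (not_le.2 h)

variable {y : R}

theorem Lf_cc (hy : y 0 = 0) (n : ℕ+) : Lf y n 0 = 0 :=
  cc_mlog1p ((cc_psi n y).trans hy)

theorem Lf_supported (hy : y 0 = 0) (n : ℕ+) : ∀ b, ¬Pdvd n b → Lf y n b = 0 :=
  mlog1p_supported ((cc_psi n y).trans hy) (psi_supported n y)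

/-- coefficient of `f * L_n` vanishes if no variable of `e` is divisible by `n`. -/
theorem mul_Lf_vanish (hy : y 0 = 0) (f : R) {n : ℕ+} {e : ℕ+ →₀ ℕ} (he : ¬∃ m ∈ e.support, n ∣ m) :
    (f * Lf y n) e = 0 :=
  mul_right_vanish (Lf_cc hy n) (Lf_supported hy n) f he

theorem logFam_vanish (hy : y 0 = 0) {l : ℕ+} {e : ℕ+ →₀ ℕ} (he : ¬∃ m ∈ e.support, l ∣ m) :
    logFam y l e = 0 := by
  rw [logFam, smul_apply']
  by_cases hd : Pdvd l e
  · have he0 : e = 0 := by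
      by_contra h0
      obtain ⟨m, hm⟩ : ∃ m, m ∈ e.support := by
        by_contra hc
        push_neg at hc
        refine h0 (Finsupp.ext fun a => ?_)
        by_contra ha
        exact hc a (Finsupp.mem_support_iff.2 ha)
      exact he ⟨m, hm, hd m hm⟩
    rw [he0, cc_mlog1p ((cc_psi l y).trans hy), mul_zero]
  · rw [mlog1p_supported ((cc_psi l y).trans hy) (psi_supported l y) e hd, mul_zero]

theorem summable_logFam (hy : y 0 = 0) : Summable (logFam y) := by
  refine (hasSum_of_coeff (logFam y) (fun e => Finset.Iic (maxv e)) ?_).summable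
  intro e l hl
  rw [Finset.mem_Iic, not_le] at hl
  exact logFam_vanish hy (not_exists_dvd_of_lt hl)

/-- the key expansion of `expFam` as a sum over `l`. -/
theorem expFam_hasSum (hy : y 0 = 0) (x : R) (k : ℕ+) :
    HasSum (fun l : ℕ+ =>
        (((ArithmeticFunction.moebius (l : ℕ) : ℤ) : ℚ) / ((k : ℚ) * (l : ℚ))) •
          (psi k x * Lf y (k * l)))
      (expFam x y k) := by
  have hM : HasSum (logFam y) (∑' l : ℕ+, logFam y l) := (summable_logFam hy).hasSum
  have h3 := hasSum_smul ((k : ℚ))⁻¹ (hasSum_psi k (hasSum_mul_left x hM))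
  have hfun : (fun l : ℕ+ => ((k : ℚ))⁻¹ • psi k (x * logFam y l))
      = fun l : ℕ+ => (((ArithmeticFunction.moebius (l : ℕ) : ℤ) : ℚ) / ((k : ℚ) * (l : ℚ))) •
          (psi k x * Lf y (k * l)) := by
    funext l
    rw [logFam, mul_smul_comm, psi_smul, psi_mul, psi_mlog1p k ((cc_psi l y).trans hy),
      psi_comp, smul_smul]
    rw [show mlog1p (psi (k * l) y) = Lf y (k * l) from rfl]
    congr 1
    have h1 : ((k : ℕ) : ℚ) ≠ 0 := pq_ne k
    have h2 : ((l : ℕ) : ℚ) ≠ 0 := pq_ne l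
    field_simp
  rw [← hfun]
  exact h3

theorem expFam_term_vanish (hy : y 0 = 0) (x : R) {k : ℕ+} (l : ℕ+) {e : ℕ+ →₀ ℕ}
    (he : ¬∃ m ∈ e.support, (k * l : ℕ+) ∣ m) :
    ((((ArithmeticFunction.moebius (l : ℕ) : ℤ) : ℚ) / ((k : ℚ) * (l : ℚ))) •
      (psi k x * Lf y (k * l))) e = 0 := by
  rw [smul_apply', mul_Lf_vanish hy _ he, mul_zero]

theorem expFam_vanish (hy : y 0 = 0) (x : R) {k : ℕ+} {e : ℕ+ →₀ ℕ} (h : maxv e < k) :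
    expFam x y k e = 0 := by
  have h0 := coeff_of_hasSum (expFam_hasSum hy x k) e ∅ (fun l _ => by
    refine expFam_term_vanish hy x l (fun hex => ?_)
    obtain ⟨m, hm, hdvd⟩ := hex
    have : (k : ℕ+) ∣ m := dvd_trans ⟨l, rfl⟩ hdvd
    exact absurd ((PNat.le_of_dvd this).trans (le_maxv hm)) (not_le.2 h))
  rw [h0, Finset.sum_empty]

theorem coeff_expFam (hy : y 0 = 0) (x : R) (k : ℕ+) (e : ℕ+ →₀ ℕ) :
    expFam x y k e = ∑ l ∈ Finset.Iic (maxv e),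
      (((ArithmeticFunction.moebius (l : ℕ) : ℤ) : ℚ) / ((k : ℚ) * (l : ℚ))) *
        (psi k x * Lf y (k * l)) e := by
  have h0 := coeff_of_hasSum (expFam_hasSum hy x k) e (Finset.Iic (maxv e)) (fun l hl => by
    rw [Finset.mem_Iic, not_le] at hl
    refine expFam_term_vanish hy x l (not_exists_dvd_of_lt ?_)
    have h2 : l ≤ k * l := PNat.le_of_dvd ⟨k, mul_comm k l⟩
    exact lt_of_lt_of_le hl h2)
  rw [h0]
  exact Finset.sum_congr rfl fun l _ => smul_apply' _ _ _



/-! ### truncation congruence for mexp -/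

theorem pow_congr {f g : R} {e : ℕ+ →₀ ℕ} (h : ∀ e' ≤ e, f e' = g e') :
    ∀ n, ∀ e' ≤ e, (f ^ n) e' = (g ^ n) e' := by
  intro n
  induction n with
  | zero => intro e' _; rfl
  | succ n ih =>
    intro e' he'
    rw [pow_succ, pow_succ, mul_apply, mul_apply]
    refine Finset.sum_congr rfl fun p hp => ?_
    rw [Finset.HasAntidiagonal.mem_antidiagonal] at hp
    have h1 : p.1 ≤ e' := le_iff_exists_add.mpr ⟨p.2, hp.symm⟩
    have h2 : p.2 ≤ e' := le_iff_exists_add.mpr ⟨p.1, by rw [← hp, add_comm]⟩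
    rw [ih p.1 (h1.trans he'), h (p.2) (h2.trans he')]

theorem mexp_congr {f g : R} (hf : f 0 = 0) (hg : g 0 = 0) (e : ℕ+ →₀ ℕ)
    (h : ∀ e' ≤ e, f e' = g e') : mexp f e = mexp g e := by
  rw [coeff_mexp hf e (deg e) (le_refl _), coeff_mexp hg e (deg e) (le_refl _)]
  exact Finset.sum_congr rfl fun n _ => by rw [pow_congr h n e (le_refl e)]

/-! ### the product-side exponents -/

theorem mul_apply_zero (u v : R) : (u * v) 0 = u 0 * v 0 := by
  rw [mul_apply, Finsupp.antidiagonal_zero, Finset.sum_singleton]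

def gArg (x y : R) (n : ℕ+) : R :=
  (((n : ℚ))⁻¹ •
      ∑ d ∈ (n : ℕ).divisors.attach,
        ((ArithmeticFunction.moebius ((n : ℕ) / (d : ℕ)) : ℤ) : ℚ) •
          psi ⟨(d : ℕ), Nat.pos_of_mem_divisors d.2⟩ x) *
    Lf y n

theorem prodFam_eq (x y : R) (n : ℕ+) : prodFam x y n = mexp (gArg x y n) := rfl

theorem gArg_cc {y : R} (hy : y 0 = 0) (x : R) (n : ℕ+) : gArg x y n 0 = 0 := by
  rw [gArg, mul_apply_zero, Lf_cc hy, mul_zero]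

theorem gArg_vanish {y : R} (hy : y 0 = 0) (x : R) {n : ℕ+} {e : ℕ+ →₀ ℕ}
    (he : ¬∃ m ∈ e.support, n ∣ m) : gArg x y n e = 0 :=
  mul_Lf_vanish hy _ he

theorem summable_gArg {y : R} (hy : y 0 = 0) (x : R) : Summable (gArg x y) := by
  refine (hasSum_of_coeff (gArg x y) (fun e => Finset.Iic (maxv e)) ?_).summable
  intro e n hn
  rw [Finset.mem_Iic, not_le] at hn
  exact gArg_vanish hy x (not_exists_dvd_of_lt hn)

def toP (d : ℕ) : ℕ+ := ⟨max d 1, lt_of_lt_of_le zero_lt_one (le_max_right d 1)⟩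

theorem toP_eq {d : ℕ} (hd : 0 < d) : toP d = ⟨d, hd⟩ := Subtype.ext (max_eq_left hd)

theorem toP_coe {d : ℕ} (hd : 0 < d) : ((toP d : ℕ+) : ℕ) = d := max_eq_left hd

theorem toP_coe_pnat (k : ℕ+) : toP (k : ℕ) = k := by
  rw [toP_eq k.pos]
  exact Subtype.ext rfl

theorem coeff_gArg (x y : R) (n : ℕ+) (e : ℕ+ →₀ ℕ) :
    gArg x y n e = ∑ dn ∈ (n : ℕ).divisors,
      ((ArithmeticFunction.moebius ((n : ℕ) / dn) : ℤ) : ℚ) / ((n : ℕ) : ℚ) *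
        (psi (toP dn) x * Lf y n) e := by
  rw [gArg, smul_mul_assoc, smul_apply', Finset.sum_mul, sum_apply', Finset.mul_sum,
    ← Finset.sum_attach ((n : ℕ).divisors) (fun dn =>
      ((ArithmeticFunction.moebius ((n : ℕ) / dn) : ℤ) : ℚ) / ((n : ℕ) : ℚ) *
        (psi (toP dn) x * Lf y n) e)]
  refine Finset.sum_congr rfl fun d _ => ?_
  rw [smul_mul_assoc, smul_apply']
  rw [show psi (⟨(d : ℕ), Nat.pos_of_mem_divisors d.2⟩ : ℕ+) x = psi (toP (d : ℕ)) x from by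
    rw [toP_eq (Nat.pos_of_mem_divisors d.2)]]
  ring

theorem expFam_cc {y : R} (hy : y 0 = 0) (x : R) (k : ℕ+) : expFam x y k 0 = 0 := by
  have h0 := coeff_of_hasSum (expFam_hasSum hy x k) 0 ∅ (fun l _ => by
    refine expFam_term_vanish hy x l ?_
    rintro ⟨m, hm, -⟩
    simp at hm)
  rw [h0, Finset.sum_empty]

theorem summable_expFam {y : R} (hy : y 0 = 0) (x : R) : Summable (expFam x y) := by
  refine (hasSum_of_coeff (expFam x y) (fun e => Finset.Iic (maxv e)) ?_).summable
  intro e k hk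
  rw [Finset.mem_Iic, not_le] at hk
  exact expFam_vanish hy x hk

/-! ### the Möbius double-sum rearrangement -/

theorem S_eq_W {y : R} (hy : y 0 = 0) (x : R) :
    (∑' k : ℕ+, expFam x y k) = ∑' n : ℕ+, gArg x y n := by
  refine MvPowerSeries.ext fun e => ?_
  rw [capp, capp]
  set mv := maxv e with hmv
  have hS := coeff_of_hasSum ((summable_expFam hy x).hasSum) e (Finset.Iic mv) (fun k hk => by
    rw [Finset.mem_Iic, not_le] at hk
    exact expFam_vanish hy x hk)
  have hW := coeff_of_hasSum ((summable_gArg hy x).hasSum) e (Finset.Iic mv) (fun n hn => by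
    rw [Finset.mem_Iic, not_le] at hn
    exact gArg_vanish hy x (not_exists_dvd_of_lt hn))
  rw [hS, hW, Finset.sum_congr rfl (fun k (_ : k ∈ Finset.Iic mv) => coeff_expFam hy x k e),
    Finset.sum_congr rfl (fun n (_ : n ∈ Finset.Iic mv) => coeff_gArg x y n e)]
  rw [← Finset.sum_product', ← Finset.sum_sigma (Finset.Iic mv) (fun n => (n : ℕ).divisors)
    (fun q => ((ArithmeticFunction.moebius ((q.1 : ℕ) / q.2) : ℤ) : ℚ) / ((q.1 : ℕ) : ℚ) *
      (psi (toP q.2) x * Lf y q.1) e)]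
  rw [← Finset.sum_filter_of_ne
    (s := Finset.Iic mv ×ˢ Finset.Iic mv)
    (p := fun p : ℕ+ × ℕ+ => p.1 * p.2 ≤ mv)
    (f := fun p : ℕ+ × ℕ+ =>
      ((ArithmeticFunction.moebius ((p.2 : ℕ)) : ℤ) : ℚ) / ((p.1 : ℚ) * (p.2 : ℚ)) *
        (psi p.1 x * Lf y (p.1 * p.2)) e)
    (fun p _ hp => by
      by_contra hc
      rw [not_le, hmv] at hc
      refine hp ?_
      show ((ArithmeticFunction.moebius ((p.2 : ℕ)) : ℤ) : ℚ) / ((p.1 : ℚ) * (p.2 : ℚ)) *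
        (psi p.1 x * Lf y (p.1 * p.2)) e = 0
      rw [mul_Lf_vanish hy _ (not_exists_dvd_of_lt hc), mul_zero])]
  refine Finset.sum_nbij' (fun p : ℕ+ × ℕ+ => (⟨p.1 * p.2, (p.1 : ℕ)⟩ : Σ _ : ℕ+, ℕ))
    (fun q : Σ _ : ℕ+, ℕ => ((toP q.2, toP ((q.1 : ℕ) / q.2)) : ℕ+ × ℕ+)) ?_ ?_ ?_ ?_ ?_
  · -- membership forward
    intro p hp
    simp only [Finset.mem_filter, Finset.mem_product, Finset.mem_Iic] at hp
    rw [Finset.mem_sigma, Finset.mem_Iic]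
    refine ⟨hp.2, ?_⟩
    rw [Nat.mem_divisors]
    exact ⟨⟨(p.2 : ℕ), (PNat.mul_coe p.1 p.2)⟩, (p.1 * p.2).pos.ne'⟩
  · -- membership backward
    intro q hq
    rw [Finset.mem_sigma, Finset.mem_Iic] at hq
    obtain ⟨hq1, hq2⟩ := hq
    rw [Nat.mem_divisors] at hq2
    obtain ⟨hdvd, _⟩ := hq2
    have hdpos : 0 < q.2 := Nat.pos_of_dvd_of_pos hdvd q.1.pos
    have hlpos : 0 < (q.1 : ℕ) / q.2 := Nat.div_pos (Nat.le_of_dvd q.1.pos hdvd) hdpos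
    have hprod : toP q.2 * toP ((q.1 : ℕ) / q.2) = q.1 := by
      apply PNat.coe_injective
      rw [PNat.mul_coe, toP_coe hdpos, toP_coe hlpos]
      exact Nat.mul_div_cancel' hdvd
    simp only [Finset.mem_filter, Finset.mem_product, Finset.mem_Iic]
    refine ⟨⟨?_, ?_⟩, ?_⟩
    · refine le_trans ((PNat.coe_le_coe _ _).1 ?_) hq1
      rw [toP_coe hdpos]
      exact Nat.le_of_dvd q.1.pos hdvd
    · refine le_trans ((PNat.coe_le_coe _ _).1 ?_) hq1
      rw [toP_coe hlpos]
      exact Nat.div_le_self _ _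
    · rw [hprod]
      exact hq1
  · -- left inverse
    intro p hp
    have h1 : toP ((p.1 : ℕ)) = p.1 := toP_coe_pnat p.1
    have h2 : toP (((p.1 * p.2 : ℕ+) : ℕ) / (p.1 : ℕ)) = p.2 := by
      rw [PNat.mul_coe, Nat.mul_div_cancel_left _ p.1.pos, toP_coe_pnat]
    exact Prod.ext h1 h2
  · -- right inverse
    intro q hq
    rw [Finset.mem_sigma, Finset.mem_Iic] at hq
    obtain ⟨hq1, hq2⟩ := hq
    rw [Nat.mem_divisors] at hq2
    obtain ⟨hdvd, _⟩ := hq2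
    have hdpos : 0 < q.2 := Nat.pos_of_dvd_of_pos hdvd q.1.pos
    have hlpos : 0 < (q.1 : ℕ) / q.2 := Nat.div_pos (Nat.le_of_dvd q.1.pos hdvd) hdpos
    have hprod : toP q.2 * toP ((q.1 : ℕ) / q.2) = q.1 := by
      apply PNat.coe_injective
      rw [PNat.mul_coe, toP_coe hdpos, toP_coe hlpos]
      exact Nat.mul_div_cancel' hdvd
    refine Sigma.ext hprod (heq_of_eq ?_)
    · show ((toP q.2 : ℕ+) : ℕ) = q.2
      exact toP_coe hdpos
  · -- terms agree
    intro p hp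
    simp only [Finset.mem_filter, Finset.mem_product, Finset.mem_Iic] at hp
    have hdiv : ((p.1 * p.2 : ℕ+) : ℕ) / (p.1 : ℕ) = (p.2 : ℕ) := by
      rw [PNat.mul_coe, Nat.mul_div_cancel_left _ p.1.pos]
    have hcast : (((p.1 * p.2 : ℕ+) : ℕ) : ℚ) = ((p.1 : ℕ) : ℚ) * ((p.2 : ℕ) : ℚ) := by
      rw [PNat.mul_coe]
      push_cast
      ring
    show ((ArithmeticFunction.moebius ((p.2 : ℕ)) : ℤ) : ℚ) / ((p.1 : ℚ) * (p.2 : ℚ)) *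
        (psi p.1 x * Lf y (p.1 * p.2)) e
      = ((ArithmeticFunction.moebius (((p.1 * p.2 : ℕ+) : ℕ) / (p.1 : ℕ)) : ℤ) : ℚ) /
          (((p.1 * p.2 : ℕ+) : ℕ) : ℚ) * (psi (toP (p.1 : ℕ)) x * Lf y (p.1 * p.2)) e
    rw [hdiv, hcast, toP_coe_pnat]


/-- The plethystic identity
`Exp(x·Log(1+y)) = ∏_{n≥1} (1+ψ_n(y))^{(1/n)·Σ_{d∣n} μ(n/d)·ψ_d(x)}`. -/
theorem statement (x y : R) (hy : MvPowerSeries.constantCoeff y = 0) :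
    Summable (logFam y) ∧
    Summable (expFam x y) ∧
    Multipliable (prodFam x y) ∧
    mexp (∑' k : ℕ+, expFam x y k) = ∏' n : ℕ+, prodFam x y n := by
  have hy0 : y 0 = 0 := hy
  have hccS : (∑' k : ℕ+, expFam x y k) 0 = 0 := by
    have h0 := coeff_of_hasSum ((summable_expFam hy0 x).hasSum) 0 ∅
      (fun k _ => expFam_cc hy0 x k)
    rw [h0, Finset.sum_empty]
  have hprod : HasProd (prodFam x y) (mexp (∑' k : ℕ+, expFam x y k)) := by
    rw [hasProd_iff_coeff]
    intro e
    refine Filter.eventually_atTop.2 ⟨Finset.Iic (maxv e), fun T hT => ?_⟩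
    have h1 : ∏ n ∈ T, prodFam x y n = mexp (∑ n ∈ T, gArg x y n) := by
      rw [Finset.prod_congr rfl (fun n _ => prodFam_eq x y n),
        ← mexp_sum T _ (fun n _ => gArg_cc hy0 x n)]
    rw [h1]
    have hccT : (∑ n ∈ T, gArg x y n) 0 = 0 := cc_sum T _ (fun n _ => gArg_cc hy0 x n)
    refine mexp_congr hccT hccS e (fun e' he' => ?_)
    rw [S_eq_W hy0 x, sum_apply']
    have hW := coeff_of_hasSum ((summable_gArg hy0 x).hasSum) e' T (fun n hn => by
      have hn2 : maxv e < n := by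
        by_contra hc
        push_neg at hc
        exact hn (hT (Finset.mem_Iic.2 hc))
      have hlt : maxv e' < n := lt_of_le_of_lt (maxv_mono he') hn2
      exact gArg_vanish hy0 x (not_exists_dvd_of_lt hlt))
    rw [hW]
  exact ⟨summable_logFam hy0, summable_expFam hy0 x, hprod.multipliable, hprod.tprod_eq.symm⟩


end Stmt1
end
end

section
/- Let q be an odd prime power, r ≥ 1, n ≥ 1 an odd integer, and λ = (λ₁,…,λ_r) ∈ ℕ^r with |λ| = λ₁+⋯+λ_r odd. Then Σ_{d ∈ 𝒫_n} N_λ(d) = 0. -/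
/-!
Let `q` be an odd prime power and `F = F_q`.  With `χ_d`, `N_λ(d)`, `𝒫_n` as in the
context:

Statement: if `n ≥ 1` is odd and `|λ| = λ₁+⋯+λ_r` is odd, then
`Σ_{d ∈ 𝒫_n} N_λ(d) = 0`.
-/

noncomputable section
open scoped Classical
open Polynomial UniqueFactorizationMonoid

namespace Stmt8

variable (F : Type) [Field F] [Fintype F]

lemma finite_natDegree_le (n : ℕ) : {m : F[X] | m.natDegree ≤ n}.Finite := by
  refine Set.Finite.of_finite_image (f := fun m : F[X] => fun k : Fin (n + 1) => m.coeff k)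
    (Set.toFinite _) ?_
  intro a ha b hb h
  ext k
  by_cases hk : k ≤ n
  · simpa using congrFun h ⟨k, Nat.lt_succ_of_le hk⟩
  · rw [Polynomial.coeff_eq_zero_of_natDegree_lt (lt_of_le_of_lt ha (by omega)),
        Polynomial.coeff_eq_zero_of_natDegree_lt (lt_of_le_of_lt hb (by omega))]

/-- Monic polynomials of degree `n`. -/
abbrev MD (n : ℕ) : Type := {m : F[X] // m.Monic ∧ m.natDegree = n}

instance (n : ℕ) : Finite (MD F n) :=
  Set.Finite.to_subtype ((finite_natDegree_le F n).subset (fun _ hm => le_of_eq hm.2))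

noncomputable instance (n : ℕ) : Fintype (MD F n) := Fintype.ofFinite _

/-- Monic squarefree polynomials of degree `n` (the set `𝒫_n`). -/
abbrev SF (n : ℕ) : Type := {d : F[X] // d.Monic ∧ Squarefree d ∧ d.natDegree = n}

instance (n : ℕ) : Finite (SF F n) :=
  Set.Finite.to_subtype ((finite_natDegree_le F n).subset (fun _ hm => le_of_eq hm.2.2))

noncomputable instance (n : ℕ) : Fintype (SF F n) := Fintype.ofFinite _

/-- The quadratic residue symbol `(a/p)` for an irreducible modulus `p`:
`0` if `p ∣ a`, `1` if `a` is a nonzero square mod `p`, and `−1` otherwise. -/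
def legP (a p : F[X]) : ℤ :=
  if p ∣ a then 0 else if ∃ b : F[X], p ∣ (b ^ 2 - a) then 1 else -1

/-- `χ_a(m) = (a/m)`: the product of `(a/pᵢ)` over the factorization `m = p₁⋯p_k` of `m`
into monic irreducibles (for monic `m`; `(a/1) = 1`). -/
def chi (a m : F[X]) : ℤ := ((normalizedFactors m).map (legP F a)).prod

/-- Tuples `(m₁,…,m_r)` of monic polynomials with `deg m_i = λ_i`. -/
abbrev Tup {r : ℕ} (lam : Fin r → ℕ) : Type := (i : Fin r) → MD F (lam i)

/-- `N_λ(d) = Σ_{(m₁,…,m_r)} ∏_i χ_d(m_i)`. -/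
def Nlam {r : ℕ} (lam : Fin r → ℕ) (d : F[X]) : ℤ :=
  ∑ t : Tup F lam, ∏ i, chi F d (t i : F[X])




section Aux
variable {F}

/-- The scaling algebra automorphism `p(x) ↦ p(αx)`. -/
def scaleEquiv (α : F) (hα : α ≠ 0) : F[X] ≃ₐ[F] F[X] :=
  AlgEquiv.ofAlgHom (aeval (C α * X)) (aeval (C α⁻¹ * X))
    (by
      apply Polynomial.algHom_ext
      rw [AlgHom.comp_apply, aeval_X, map_mul, aeval_C, aeval_X, algebraMap_eq,
        ← mul_assoc, ← C_mul, inv_mul_cancel₀ hα, C_1, one_mul, AlgHom.id_apply])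
    (by
      apply Polynomial.algHom_ext
      rw [AlgHom.comp_apply, aeval_X, map_mul, aeval_C, aeval_X, algebraMap_eq,
        ← mul_assoc, ← C_mul, mul_inv_cancel₀ hα, C_1, one_mul, AlgHom.id_apply])

lemma scaleEquiv_apply (α : F) (hα : α ≠ 0) (p : F[X]) :
    scaleEquiv α hα p = p.comp (C α * X) := by
  show aeval (C α * X) p = _
  rw [aeval_def, algebraMap_eq]; rfl

lemma natDegree_scale (α : F) (hα : α ≠ 0) (p : F[X]) :
    (p.comp (C α * X)).natDegree = p.natDegree := by
  rw [natDegree_comp, natDegree_C_mul hα, natDegree_X, mul_one]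

lemma leadingCoeff_scale (α : F) (hα : α ≠ 0) (p : F[X]) :
    (p.comp (C α * X)).leadingCoeff = p.leadingCoeff * α ^ p.natDegree := by
  rw [leadingCoeff_comp (by rw [natDegree_C_mul hα, natDegree_X]; norm_num)]
  congr 1
  rw [leadingCoeff_mul, leadingCoeff_C, leadingCoeff_X, mul_one]


/-- Monic-normalized scaling: `m(x) ↦ α^{-deg m} m(αx)`. -/
def til (α : F) (m : F[X]) : F[X] := C ((α ^ m.natDegree)⁻¹) * m.comp (C α * X)

lemma til_natDegree (α : F) (hα : α ≠ 0) (m : F[X]) : (til α m).natDegree = m.natDegree := by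
  rw [til, natDegree_C_mul (inv_ne_zero (pow_ne_zero _ hα)), natDegree_scale α hα]

lemma til_monic {α : F} (hα : α ≠ 0) {m : F[X]} (hm : m.Monic) : (til α m).Monic := by
  have h : (til α m).leadingCoeff = 1 := by
    rw [til, leadingCoeff_mul, leadingCoeff_C, leadingCoeff_scale α hα, hm.leadingCoeff, one_mul,
      inv_mul_cancel₀ (pow_ne_zero _ hα)]
  exact h

lemma til_one (α : F) : til α 1 = 1 := by
  simp [til]

lemma til_mul {α : F} (hα : α ≠ 0) {a b : F[X]} (ha : a.Monic) (hb : b.Monic) :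
    til α (a * b) = til α a * til α b := by
  rw [til, til, til, ha.natDegree_mul hb, mul_comp, pow_add, mul_inv, C_mul]
  ring

lemma til_til {α : F} (hα : α ≠ 0) (m : F[X]) : til α⁻¹ (til α m) = m := by
  rw [til, til_natDegree α hα, til, mul_comp, C_comp, comp_assoc, mul_comp, C_comp, X_comp,
    ← mul_assoc, ← C_mul, ← mul_assoc, ← C_mul]
  rw [mul_inv_cancel₀ hα, C_1, one_mul, comp_X, inv_pow, inv_inv,
    mul_inv_cancel₀ (pow_ne_zero _ hα), C_1, one_mul]

lemma til_eq_scale (α : F) (hα : α ≠ 0) (m : F[X]) :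
    til α m = C ((α ^ m.natDegree)⁻¹) * scaleEquiv α hα m := by
  rw [til, scaleEquiv_apply]

lemma til_irreducible {α : F} (hα : α ≠ 0) {p : F[X]} (hp : Irreducible p) :
    Irreducible (til α p) := by
  rw [til_eq_scale α hα, irreducible_isUnit_mul (isUnit_C.2 (inv_ne_zero (pow_ne_zero _ hα)).isUnit)]
  exact hp.map (scaleEquiv α hα)

lemma til_squarefree {α : F} (hα : α ≠ 0) {d : F[X]} (hd : Squarefree d) :
    Squarefree (til α d) := by
  intro x hx
  rw [til_eq_scale α hα] at hx
  set e := scaleEquiv α hα with he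
  obtain ⟨y, hy⟩ := hx
  have h2 : x * x ∣ e d := by
    refine ⟨C (α ^ d.natDegree) * y, ?_⟩
    have : C (α ^ d.natDegree) * (C ((α ^ d.natDegree)⁻¹) * e d) = C (α ^ d.natDegree) * (x * x * y) := by
      rw [hy]
    rw [← mul_assoc, ← C_mul, mul_inv_cancel₀ (pow_ne_zero _ hα), C_1, one_mul] at this
    rw [this]; ring
  obtain ⟨z, hz⟩ := h2
  have hd' : e.symm x * e.symm x ∣ d := by
    refine ⟨e.symm z, ?_⟩
    have := congrArg e.symm hz
    rwa [AlgEquiv.symm_apply_apply, map_mul, map_mul] at this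
  have := hd _ hd'
  have : IsUnit (e (e.symm x)) := this.map e
  rwa [AlgEquiv.apply_symm_apply] at this



lemma legP_eq_quadChar {p : F[X]} (hp : Irreducible p) [Fact (Irreducible p)]
    [Fintype (AdjoinRoot p)] (a : F[X]) :
    legP F a p = quadraticChar (AdjoinRoot p) (AdjoinRoot.mk p a) := by
  by_cases h0 : p ∣ a
  · rw [legP, if_pos h0, (AdjoinRoot.mk_eq_zero).2 h0, quadraticChar_zero]
  · have h0' : AdjoinRoot.mk p a ≠ 0 := by
      rwa [Ne, AdjoinRoot.mk_eq_zero]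
    by_cases hsq : ∃ b : F[X], p ∣ b ^ 2 - a
    · have hs : IsSquare (AdjoinRoot.mk p a) := by
        obtain ⟨b, hb⟩ := hsq
        refine ⟨AdjoinRoot.mk p b, ?_⟩
        have h := (AdjoinRoot.mk_eq_zero (f := p)).2 hb
        rw [map_sub, map_pow, sub_eq_zero] at h
        rw [← h]; ring
      rw [legP, if_neg h0, if_pos hsq, (quadraticChar_one_iff_isSquare h0').2 hs]
    · have hs : ¬ IsSquare (AdjoinRoot.mk p a) := by
        rintro ⟨y, hy⟩
        obtain ⟨b, rfl⟩ := AdjoinRoot.mk_surjective y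
        refine hsq ⟨b, (AdjoinRoot.mk_eq_zero (f := p)).1 ?_⟩
        rw [map_sub, map_pow, hy]; ring
      rw [legP, if_neg h0, if_neg hsq, quadraticChar_neg_one_iff_not_isSquare.2 hs]

lemma pow_card_pow_div_two (hch : ringChar F ≠ 2) {c : F} (hc : ¬IsSquare c) (f : ℕ) :
    c ^ (Fintype.card F ^ f / 2) = (-1 : F) ^ f := by
  have hc0 : c ≠ 0 := fun h => hc ⟨0, by rw [h, mul_zero]⟩
  have hQ : Fintype.card F % 2 = 1 := FiniteField.odd_card_of_char_ne_two hch
  have hhalf : c ^ (Fintype.card F / 2) = -1 := by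
    rcases FiniteField.pow_dichotomy hch hc0 with h | h
    · exact absurd ((FiniteField.isSquare_iff hch hc0).2 h) hc
    · exact h
  induction f with
  | zero => simp
  | succ f ih =>
    set Q := Fintype.card F with hQdef
    have hpf : Q ^ f % 2 = 1 := by
      rw [Nat.pow_mod, hQ, one_pow, Nat.one_mod_eq_one.2 (by norm_num)]
    have key : Q ^ (f + 1) / 2 = (Q ^ f / 2) * Q + Q / 2 := by
      have e1 : Q ^ f = 2 * (Q ^ f / 2) + 1 := by omega
      have e2 : Q = 2 * (Q / 2) + 1 := by omega
      have e3 : Q ^ (f + 1) = 2 * ((Q ^ f / 2) * Q + Q / 2) + 1 := by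
        rw [pow_succ]
        calc Q ^ f * Q = (2 * (Q ^ f / 2) + 1) * (2 * (Q / 2) + 1) := by rw [← e1, ← e2]
        _ = 2 * ((Q ^ f / 2) * (2 * (Q / 2) + 1) + Q / 2) + 1 := by ring
        _ = 2 * ((Q ^ f / 2) * Q + Q / 2) + 1 := by rw [← e2]
      omega
    rw [key, pow_add, pow_mul, FiniteField.pow_card, ih, hhalf, pow_succ]

lemma isSquare_algebraMap_iff {K : Type} [Field K] [Fintype K] [Algebra F K]
    (hch : ringChar F ≠ 2) {c : F} (hc : ¬IsSquare c) :
    IsSquare (algebraMap F K c) ↔ Even (Module.finrank F K) := by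
  have hc0 : c ≠ 0 := fun h => hc ⟨0, by rw [h, mul_zero]⟩
  have hcK0 : algebraMap F K c ≠ 0 := by
    simpa using hc0
  haveI : CharP K (ringChar F) :=
    charP_of_injective_algebraMap (algebraMap F K).injective (ringChar F)
  have hchK : ringChar K ≠ 2 := by
    rw [ringChar.eq K (ringChar F)]; exact hch
  rw [FiniteField.isSquare_iff hchK hcK0, ← map_pow,
    Module.card_eq_pow_finrank (K := F) (V := K), pow_card_pow_div_two hch hc]
  rw [map_pow, map_neg, map_one]
  exact neg_one_pow_eq_one_iff_even (Ring.neg_one_ne_one_of_char_ne_two hchK)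

lemma legP_C_mul (hch : ringChar F ≠ 2) {p : F[X]} (hp : Irreducible p)
    {c : F} (hc : ¬IsSquare c) (d : F[X]) :
    legP F (C c * d) p = (-1) ^ p.natDegree * legP F d p := by
  haveI : Fact (Irreducible p) := ⟨hp⟩
  haveI : Module.Finite F (AdjoinRoot p) := (AdjoinRoot.powerBasis hp.ne_zero).finite
  haveI : Finite (AdjoinRoot p) := Module.finite_of_finite F
  letI : Fintype (AdjoinRoot p) := Fintype.ofFinite _
  have hc0 : c ≠ 0 := fun h => hc ⟨0, by rw [h, mul_zero]⟩
  have hfr : Module.finrank F (AdjoinRoot p) = p.natDegree := by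
    rw [(AdjoinRoot.powerBasis hp.ne_zero).finrank, AdjoinRoot.powerBasis_dim]
  have hmkC : AdjoinRoot.mk p (C c) = algebraMap F (AdjoinRoot p) c := by
    rw [AdjoinRoot.algebraMap_eq]; exact AdjoinRoot.mk_C c
  have hCval : quadraticChar (AdjoinRoot p) (AdjoinRoot.mk p (C c)) = (-1) ^ p.natDegree := by
    have hne : AdjoinRoot.mk p (C c) ≠ 0 := by
      rw [hmkC]; simpa using hc0
    by_cases hev : Even p.natDegree
    · rw [(quadraticChar_one_iff_isSquare hne).2
        (by rw [hmkC]; exact (isSquare_algebraMap_iff hch hc).2 (hfr ▸ hev)),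
        (Even.neg_one_pow hev)]
    · rw [quadraticChar_neg_one_iff_not_isSquare.2
        (by rw [hmkC]; exact fun h => hev (hfr ▸ ((isSquare_algebraMap_iff hch hc).1 h))),
        (Odd.neg_one_pow (Nat.not_even_iff_odd.1 hev))]
  rw [legP_eq_quadChar hp, legP_eq_quadChar hp, map_mul, map_mul, hCval]


lemma scaleEquiv_C (α : F) (hα : α ≠ 0) (c : F) : scaleEquiv α hα (C c) = C c := by
  rw [scaleEquiv_apply, C_comp]

lemma legP_unit_mul {u : F} (hu : u ≠ 0) (a q : F[X]) : legP F a (C u * q) = legP F a q := by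
  have ha : Associated q (C u * q) :=
    ⟨(isUnit_C.2 hu.isUnit).unit, by rw [mul_comm, IsUnit.unit_spec]⟩
  unfold legP
  simp only [← ha.dvd_iff_dvd_left]

lemma legP_scale {α : F} (hα : α ≠ 0) (a p : F[X]) :
    legP F (scaleEquiv α hα a) (scaleEquiv α hα p) = legP F a p := by
  set e := scaleEquiv α hα with he
  have h1 : e p ∣ e a ↔ p ∣ a := by
    constructor
    · intro h
      have := map_dvd e.symm h
      rwa [AlgEquiv.symm_apply_apply, AlgEquiv.symm_apply_apply] at this
    · intro h; have := map_dvd e h; exact this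
  have h2 : (∃ b : F[X], e p ∣ b ^ 2 - e a) ↔ ∃ b : F[X], p ∣ b ^ 2 - a := by
    constructor
    · rintro ⟨b, hb⟩
      refine ⟨e.symm b, ?_⟩
      have := map_dvd e.symm hb
      rwa [map_sub, map_pow, AlgEquiv.symm_apply_apply, AlgEquiv.symm_apply_apply] at this
    · rintro ⟨b, hb⟩
      refine ⟨e b, ?_⟩
      have := map_dvd e hb
      rwa [map_sub, map_pow] at this
  unfold legP
  rw [h1, h2]

lemma legP_til (hch : ringChar F ≠ 2) {α : F} (hα : α ≠ 0) {p : F[X]} (hp : Irreducible p)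
    (d : F[X]) (hns : ¬IsSquare ((α ^ d.natDegree)⁻¹)) :
    legP F (til α d) (til α p) = (-1) ^ p.natDegree * legP F d p := by
  rw [til_eq_scale α hα p, legP_unit_mul (inv_ne_zero (pow_ne_zero _ hα))]
  have h3 : til α d = scaleEquiv α hα (C ((α ^ d.natDegree)⁻¹) * d) := by
    rw [map_mul, scaleEquiv_C, til_eq_scale α hα]
  rw [h3, legP_scale hα, legP_C_mul hch hp hns]


lemma chi_one (a : F[X]) : chi F a 1 = 1 := by
  simp [chi, normalizedFactors_one]

lemma chi_mul_irreducible {p m : F[X]} (hp : Irreducible p) (hpm : p.Monic) (hm : m ≠ 0)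
    (a : F[X]) : chi F a (p * m) = legP F a p * chi F a m := by
  rw [chi, normalizedFactors_mul hp.ne_zero hm, normalizedFactors_irreducible hp,
    hpm.normalize_eq_self]
  simp [chi]


lemma nonsquare_pow_inv (hch : ringChar F ≠ 2) {α : F} (hα : ¬IsSquare α) {n : ℕ} (hn : Odd n) :
    ¬IsSquare ((α ^ n)⁻¹) := by
  have hα0 : α ≠ 0 := fun h => hα ⟨0, by rw [h, mul_zero]⟩
  intro h
  rw [isSquare_inv] at h
  obtain ⟨k, hk⟩ := hn
  obtain ⟨s, hs⟩ := h
  apply hα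
  refine ⟨s * (α ^ k)⁻¹, ?_⟩
  have hαk : (α : F) ^ k ≠ 0 := pow_ne_zero _ hα0
  field_simp
  rw [sq s, ← hs, hk]
  ring

lemma chi_til (hch : ringChar F ≠ 2) {α : F} (hα : α ≠ 0) {d : F[X]}
    (hns : ¬IsSquare ((α ^ d.natDegree)⁻¹)) :
    ∀ k (m : F[X]), m.Monic → m.natDegree = k →
      chi F (til α d) (til α m) = (-1) ^ m.natDegree * chi F d m := by
  intro k
  induction k using Nat.strong_induction_on with
  | _ k ih =>
    intro m hm hk
    rcases Nat.eq_zero_or_pos k with h0 | hpos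
    · have h1 : m = 1 := hm.natDegree_eq_zero.1 (by omega)
      subst h1
      simp [til_one, chi_one]
    · have hm0 : m ≠ 0 := hm.ne_zero
      have hmu : ¬IsUnit m := by
        intro h
        rw [Polynomial.natDegree_eq_zero_of_isUnit h] at hk
        omega
      obtain ⟨i, hi, hidvd⟩ := WfDvdMonoid.exists_irreducible_factor hmu hm0
      have hpirr : Irreducible (normalize i) := (associated_normalize i).irreducible hi
      have hpm : (normalize i).Monic := monic_normalize hi.ne_zero
      have hpdvd : normalize i ∣ m := normalize_dvd_iff.2 hidvd
      obtain ⟨b, rfl⟩ := hpdvd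
      set p := normalize i with hpdef
      have hbm : b.Monic := hpm.of_mul_monic_left hm
      have hdegp : 0 < p.natDegree := hpirr.natDegree_pos
      have hdegs : (p * b).natDegree = p.natDegree + b.natDegree := hpm.natDegree_mul hbm
      have hblt : b.natDegree < k := by omega
      rw [til_mul hα hpm hbm,
        chi_mul_irreducible (til_irreducible hα hpirr) (til_monic hα hpm)
          (til_monic hα hbm).ne_zero,
        chi_mul_irreducible hpirr hpm hbm.ne_zero,
        legP_til hch hα hpirr d hns,
        ih b.natDegree hblt b hbm rfl, hdegs, pow_add]
      ring


def tilMD (α : F) (hα : α ≠ 0) (k : ℕ) : MD F k ≃ MD F k where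
  toFun m := ⟨til α m, til_monic hα m.2.1, by rw [til_natDegree α hα]; exact m.2.2⟩
  invFun m := ⟨til α⁻¹ m, til_monic (inv_ne_zero hα) m.2.1,
    by rw [til_natDegree α⁻¹ (inv_ne_zero hα)]; exact m.2.2⟩
  left_inv m := Subtype.ext (til_til hα (m : F[X]))
  right_inv m := Subtype.ext (by
    have := til_til (inv_ne_zero hα) (m : F[X]); rwa [inv_inv] at this)

def tilSF (α : F) (hα : α ≠ 0) (n : ℕ) : SF F n ≃ SF F n where
  toFun m := ⟨til α m, til_monic hα m.2.1, til_squarefree hα m.2.2.1,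
    by rw [til_natDegree α hα]; exact m.2.2.2⟩
  invFun m := ⟨til α⁻¹ m, til_monic (inv_ne_zero hα) m.2.1,
    til_squarefree (inv_ne_zero hα) m.2.2.1,
    by rw [til_natDegree α⁻¹ (inv_ne_zero hα)]; exact m.2.2.2⟩
  left_inv m := Subtype.ext (til_til hα (m : F[X]))
  right_inv m := Subtype.ext (by
    have := til_til (inv_ne_zero hα) (m : F[X]); rwa [inv_inv] at this)

lemma Nlam_til (hch : ringChar F ≠ 2) {α : F} (hα0 : α ≠ 0) (hαns : ¬IsSquare α)
    {r : ℕ} (lam : Fin r → ℕ) {d : F[X]} (hdn : Odd d.natDegree) :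
    Nlam F lam (til α d) = (-1) ^ (∑ i, lam i) * Nlam F lam d := by
  have hns := nonsquare_pow_inv hch hαns hdn
  rw [Nlam, Nlam, ← Equiv.sum_comp (Equiv.piCongrRight fun i => tilMD α hα0 (lam i))
    (fun t : Tup F lam => ∏ i, chi F (til α d) ((t i : F[X])))]
  rw [Finset.mul_sum]
  refine Finset.sum_congr rfl fun t _ => ?_
  have hstep : ∀ i : Fin r,
      chi F (til α d) (((Equiv.piCongrRight fun i => tilMD α hα0 (lam i)) t i : F[X]))
        = (-1) ^ (lam i) * chi F d ((t i : F[X])) := by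
    intro i
    have h1 : ((Equiv.piCongrRight fun i => tilMD α hα0 (lam i)) t i : F[X])
        = til α ((t i : F[X])) := rfl
    rw [h1, chi_til hch hα0 hns ((t i : F[X]).natDegree) _ (t i).2.1 rfl, (t i).2.2]
  calc (∏ i, chi F (til α d) (((Equiv.piCongrRight fun i => tilMD α hα0 (lam i)) t i : F[X])))
      = ∏ i, ((-1) ^ (lam i) * chi F d ((t i : F[X]))) := Finset.prod_congr rfl fun i _ => hstep i
    _ = (∏ i, ((-1 : ℤ) ^ (lam i))) * ∏ i, chi F d ((t i : F[X])) := Finset.prod_mul_distrib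
    _ = (-1) ^ (∑ i, lam i) * ∏ i, chi F d ((t i : F[X])) := by
        rw [Finset.prod_pow_eq_pow_sum]

end Aux

theorem statement (q : ℕ) (hq : Fintype.card F = q) (hodd : Odd q)
    (r : ℕ) (hr : 1 ≤ r) (lam : Fin r → ℕ) (hlam : Odd (∑ i, lam i))
    (n : ℕ) (hn : 1 ≤ n) (hnodd : Odd n) :
    ∑ d : SF F n, Nlam F lam (d : F[X]) = 0 := by
  have hch : ringChar F ≠ 2 := by
    intro h
    have h2 := FiniteField.even_card_of_char_two h
    rw [hq] at h2
    obtain ⟨k, hk⟩ := hodd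
    omega
  obtain ⟨α, hαns⟩ := FiniteField.exists_nonsquare (F := F) hch
  have hα0 : α ≠ 0 := fun h => hαns ⟨0, by rw [h, mul_zero]⟩
  have key : ∀ d : SF F n, Nlam F lam (til α (d : F[X])) = - Nlam F lam (d : F[X]) := by
    intro d
    rw [Nlam_til hch hα0 hαns lam (by rw [d.2.2.2]; exact hnodd), hlam.neg_one_pow, neg_one_mul]
  have h2 : ∑ d : SF F n, Nlam F lam (d : F[X])
      = ∑ d : SF F n, Nlam F lam ((tilSF α hα0 n d : F[X])) :=
    (Equiv.sum_comp (tilSF α hα0 n) (fun d : SF F n => Nlam F lam (d : F[X]))).symm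
  have h3 : ∑ d : SF F n, Nlam F lam ((tilSF α hα0 n d : F[X]))
      = - ∑ d : SF F n, Nlam F lam (d : F[X]) := by
    rw [← Finset.sum_neg_distrib]
    exact Finset.sum_congr rfl fun d _ => key d
  omega

end Stmt8
end
end

section
/- Let r ≥ 1 and g ≥ 0 be integers and λ a partition with λ₁ ≤ r, with conjugate λ' = (λ'₁ ≥ … ≥ λ'_r ≥ 0) padded with zeros to r parts. Then in the rational function field ℚ(t₁,…,t_r) one has the identity det( t_i^{g−λ'_{r+1−j}+r+1−j} − t_i^{−(g−λ'_{r+1−j}+r+1−j)} )_{1≤i,j≤r} / det( t_i^{r+1−j} − t_i^{−(r+1−j)} )_{1≤i,j≤r} = Σ_{ε ∈ {±1}^r} s_{λ'}(t₁^{ε₁},…,t_r^{ε_r}) / ( ∏_{i=1}^r t_i^{ε_i·g} · ∏_{1≤i≤j≤r} (1 − t_i^{ε_i} t_j^{ε_j}) ), the sum being over all tuples ε = (ε₁,…,ε_r) ∈ {−1,1}^r. (The left-hand side is the symplectic Schur function s⟨λ†(g)⟩(t₁^{±1},…,t_r^{±1}) with λ† = (g−λ'_r ≥ … ≥ g−λ'₁).)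 -/
/-!
Let `λ` be a partition with `λ₁ ≤ r`, with conjugate `λ' = (λ'₁ ≥ … ≥ λ'_r ≥ 0)` padded
with zeros to `r` parts (encoded by the antitone function `μ : Fin r → ℕ`, 0-based, so
`μ 0 = λ'₁`).  In the rational function field `ℚ(t₁,…,t_r)`:

`det(t_i^{g−λ'_{r+1−j}+r+1−j} − t_i^{−(g−λ'_{r+1−j}+r+1−j)}) / det(t_i^{r+1−j} − t_i^{−(r+1−j)})
  = Σ_{ε ∈ {±1}^r} s_{λ'}(t₁^{ε₁},…,t_r^{ε_r}) /
      (∏_i t_i^{ε_i g} · ∏_{1≤i≤j≤r} (1 − t_i^{ε_i} t_j^{ε_j}))`,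
where `s_ν(u) = det(u_i^{ν_j+r−j}) / det(u_i^{r−j})` is the Schur polynomial
(bialternant formula).
-/

noncomputable section

namespace Stmt9

/-- The rational function field `ℚ(t₁,…,t_r)`. -/
abbrev K (r : ℕ) : Type := FractionRing (MvPolynomial (Fin r) ℚ)

/-- The variable `t_i` as an element of `ℚ(t₁,…,t_r)`. -/
def t (r : ℕ) (i : Fin r) : K r :=
  algebraMap (MvPolynomial (Fin r) ℚ) (K r) (MvPolynomial.X i)

/-- The Schur polynomial `s_ν(u₁,…,u_r) = det(u_i^{ν_j+r−j}) / det(u_i^{r−j})`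
(bialternant formula); the column index `j` below is 0-based, so `r − j` (1-based)
becomes `r − 1 − j` (0-based). -/
def schur (r : ℕ) (ν : Fin r → ℕ) (u : Fin r → K r) : K r :=
  Matrix.det (Matrix.of fun i j : Fin r => u i ^ (ν j + (r - 1 - (j : ℕ)))) /
    Matrix.det (Matrix.of fun i j : Fin r => u i ^ (r - 1 - (j : ℕ)))

/-- The sign `ε_i ∈ {±1}` encoded by a boolean. -/
def sgn (ε : Bool) : ℤ := if ε then 1 else -1


def cheb : ℕ → Polynomial ℤ
  | 0 => 1
  | 1 => Polynomial.X
  | (k+2) => Polynomial.X * cheb (k+1) - cheb k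

lemma cheb_aux : ∀ k, (cheb k).Monic ∧ (cheb k).natDegree = k := by
  intro k
  induction k using Nat.strong_induction_on with
  | _ k ih =>
    match k with
    | 0 => exact ⟨Polynomial.monic_one, Polynomial.natDegree_one⟩
    | 1 => exact ⟨Polynomial.monic_X, Polynomial.natDegree_X⟩
    | (k+2) =>
      obtain ⟨h1m, h1d⟩ := ih (k+1) (by omega)
      obtain ⟨h0m, h0d⟩ := ih k (by omega)
      have hm : (Polynomial.X * cheb (k+1)).Monic := Polynomial.monic_X.mul h1m
      have hd : (Polynomial.X * cheb (k+1)).natDegree = k+2 := by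
        rw [Polynomial.monic_X.natDegree_mul h1m, Polynomial.natDegree_X, h1d]; omega
      have hlt : (cheb k).degree < (Polynomial.X * cheb (k+1)).degree := by
        apply lt_of_le_of_lt (Polynomial.degree_le_natDegree)
        rw [Polynomial.degree_eq_natDegree hm.ne_zero, hd, h0d]
        exact_mod_cast by omega
      have hltn : (cheb k).natDegree < (Polynomial.X * cheb (k+1)).natDegree := by
        rw [hd, h0d]; omega
      refine ⟨hm.sub_of_left hlt, ?_⟩
      rw [show cheb (k+2) = Polynomial.X * cheb (k+1) - cheb k from rfl,
        Polynomial.natDegree_sub_eq_left_of_natDegree_lt hltn, hd]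

lemma cheb_eval {F : Type*} [Field F] (f : ℤ →+* F) (x : F) (hx : x ≠ 0) :
    ∀ k : ℕ, (x - x⁻¹) * Polynomial.eval (x + x⁻¹) ((cheb k).map f)
      = x^(k+1) - (x⁻¹)^(k+1) := by
  intro k
  induction k using Nat.strong_induction_on with
  | _ k ih =>
    match k with
    | 0 => simp [cheb]
    | 1 => simp [cheb]; field_simp; ring
    | (k+2) =>
      have h1 := ih (k+1) (by omega)
      have h0 := ih k (by omega)
      rw [show cheb (k+2) = Polynomial.X * cheb (k+1) - cheb k from rfl]
      rw [Polynomial.map_sub, Polynomial.map_mul, Polynomial.map_X,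
        Polynomial.eval_sub, Polynomial.eval_mul, Polynomial.eval_X, mul_sub,
        show (x - x⁻¹) * ((x + x⁻¹) * Polynomial.eval (x + x⁻¹) ((cheb (k+1)).map f))
          = (x + x⁻¹) * ((x - x⁻¹) * Polynomial.eval (x + x⁻¹) ((cheb (k+1)).map f)) by ring,
        h1, h0]
      linear_combination (x^(k+1) - x⁻¹^(k+1)) * mul_inv_cancel₀ hx

lemma inj (r : ℕ) : Function.Injective (algebraMap (MvPolynomial (Fin r) ℚ) (K r)) :=
  IsFractionRing.injective _ _

lemma t_ne_zero (r : ℕ) (i : Fin r) : t r i ≠ 0 := by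
  intro h
  have := inj r (h.trans (map_zero _).symm)
  exact MvPolynomial.X_ne_zero i this

lemma t_mul_t_ne_one (r : ℕ) (i j : Fin r) : t r i * t r j ≠ 1 := by
  intro h
  have h2 : algebraMap (MvPolynomial (Fin r) ℚ) (K r) (MvPolynomial.X i * MvPolynomial.X j)
      = algebraMap (MvPolynomial (Fin r) ℚ) (K r) 1 := by
    rw [map_mul, map_one]; exact h
  have h3 := congrArg (MvPolynomial.eval (fun _ => (0:ℚ))) (inj r h2)
  simp at h3

lemma t_ne_t (r : ℕ) {i j : Fin r} (h : i ≠ j) : t r i ≠ t r j := by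
  intro he
  have h3 := congrArg (MvPolynomial.eval (Pi.single i (1:ℚ))) (inj r he)
  simp [Pi.single_apply, h.symm] at h3


section W
variable {r : ℕ} (ε : Fin r → Bool)

/-- abbreviation for `t_i^{ε_i}` -/
def w (ε : Fin r → Bool) (i : Fin r) : K r := t r i ^ sgn (ε i)

lemma w_ne_zero (i : Fin r) : w ε i ≠ 0 := zpow_ne_zero _ (t_ne_zero r i)

lemma w_true (i : Fin r) (h : ε i = true) : w ε i = t r i := by simp [w, sgn, h]
lemma w_false (i : Fin r) (h : ε i = false) : w ε i = (t r i)⁻¹ := by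
  simp [w, sgn, h, zpow_neg]

lemma w_add_inv (i : Fin r) : w ε i + (w ε i)⁻¹ = t r i + (t r i)⁻¹ := by
  cases h : ε i
  · rw [w_false ε i h, inv_inv, add_comm]
  · rw [w_true ε i h]

lemma w_mul_w_ne_one {i j : Fin r} (hij : i ≤ j) : w ε i * w ε j ≠ 1 := by
  rcases eq_or_lt_of_le hij with rfl | hlt
  · cases h : ε i
    · rw [w_false ε i h, ← mul_inv]
      simpa using inv_ne_one.mpr (t_mul_t_ne_one r i i)
    · rw [w_true ε i h]; exact t_mul_t_ne_one r i i
  · have hne : i ≠ j := ne_of_lt hlt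
    cases hi : ε i <;> cases hj : ε j
    · rw [w_false ε i hi, w_false ε j hj, ← mul_inv]
      simpa using inv_ne_one.mpr (t_mul_t_ne_one r i j)
    · rw [w_false ε i hi, w_true ε j hj]
      intro h
      exact t_ne_t r hne.symm (eq_of_inv_mul_eq_one h).symm
    · rw [w_true ε i hi, w_false ε j hj]
      intro h
      rw [mul_comm] at h
      exact t_ne_t r hne (eq_of_inv_mul_eq_one h).symm
    · rw [w_true ε i hi, w_true ε j hj]; exact t_mul_t_ne_one r i j

lemma w_ne_w {i j : Fin r} (hne : i ≠ j) : w ε i ≠ w ε j := by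
  cases hi : ε i <;> cases hj : ε j
  · rw [w_false ε i hi, w_false ε j hj]
    exact fun h => t_ne_t r hne (inv_injective h)
  · rw [w_false ε i hi, w_true ε j hj]
    intro h
    exact t_mul_t_ne_one r j i (by rw [← h, inv_mul_cancel₀ (t_ne_zero r i)])
  · rw [w_true ε i hi, w_false ε j hj]
    intro h
    exact t_mul_t_ne_one r i j (by rw [h, inv_mul_cancel₀ (t_ne_zero r j)])
  · rw [w_true ε i hi, w_true ε j hj]; exact t_ne_t r hne

end W


open Finset in
/-- descending Vandermonde determinant via row scaling -/
lemma det_desc_vandermonde {F : Type*} [Field F] {n : ℕ} (v : Fin n → F) (hv : ∀ i, v i ≠ 0) :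
    Matrix.det (Matrix.of fun i j : Fin n => v i ^ (n - 1 - (j : ℕ))) =
      (∏ i, v i ^ (n - 1)) * ∏ i : Fin n, ∏ j ∈ Ioi i, ((v j)⁻¹ - (v i)⁻¹) := by
  have he : ∀ i j : Fin n, v i ^ (n - 1 - (j : ℕ)) = v i ^ (n-1) * ((v i)⁻¹) ^ (j : ℕ) := by
    intro i j
    have hj : (j : ℕ) ≤ n - 1 := by omega
    rw [inv_pow]
    exact pow_sub₀ (v i) (hv i) hj
  calc Matrix.det (Matrix.of fun i j : Fin n => v i ^ (n - 1 - (j : ℕ)))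
      = Matrix.det (Matrix.of fun i j : Fin n => v i ^ (n-1) * ((v i)⁻¹) ^ (j : ℕ)) := by
        congr 1; ext i j; exact he i j
    _ = (∏ i, v i ^ (n - 1)) * Matrix.det (Matrix.of fun i j : Fin n => ((v i)⁻¹) ^ (j : ℕ)) :=
        Matrix.det_mul_column _ _
    _ = (∏ i, v i ^ (n - 1)) * ∏ i : Fin n, ∏ j ∈ Ioi i, ((v j)⁻¹ - (v i)⁻¹) := by
        rw [show (Matrix.of fun i j : Fin n => ((v i)⁻¹) ^ (j : ℕ)) =
          Matrix.vandermonde (fun i => (v i)⁻¹) from rfl, Matrix.det_vandermonde]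

/-- multilinear expansion of the symplectic-type determinant over sign choices -/
lemma det_expand {r : ℕ} (a : Fin r → ℤ) :
    Matrix.det (Matrix.of fun i j : Fin r => t r i ^ a j - t r i ^ (-a j)) =
    ∑ ε : Fin r → Bool, (∏ i, ((sgn (ε i) : ℤ) : K r)) *
      Matrix.det (Matrix.of fun i j : Fin r => w ε i ^ a j) := by
  classical
  have hM : (Matrix.of fun i j : Fin r => t r i ^ a j - t r i ^ (-a j)) =
      (fun i => ∑ b : Bool, fun j => ((sgn b : ℤ) : K r) * (t r i ^ sgn b) ^ a j) := by
    funext i j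
    simp only [Fintype.sum_bool]
    simp [sgn, zpow_neg, ← zpow_mul]
    ring
  have key := MultilinearMap.map_sum
    (f := (Matrix.detRowAlternating : (Fin r → K r) [⋀^Fin r]→ₗ[K r] K r).toMultilinearMap)
    (g := fun (i : Fin r) (b : Bool) => fun j => ((sgn b : ℤ) : K r) * (t r i ^ sgn b) ^ a j)
  rw [hM]
  rw [show Matrix.det (R := K r) (n := Fin r)
        (fun i => ∑ b : Bool, fun j => ((sgn b : ℤ) : K r) * (t r i ^ sgn b) ^ a j)
      = (Matrix.detRowAlternating :
          (Fin r → K r) [⋀^Fin r]→ₗ[K r] K r).toMultilinearMap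
          (fun i => ∑ b : Bool, fun j => ((sgn b : ℤ) : K r) * (t r i ^ sgn b) ^ a j) from rfl,
    key]
  refine Finset.sum_congr rfl fun ε _ => ?_
  rw [show ((Matrix.detRowAlternating :
          (Fin r → K r) [⋀^Fin r]→ₗ[K r] K r).toMultilinearMap
          (fun i => fun j => ((sgn (ε i) : ℤ) : K r) * (t r i ^ sgn (ε i)) ^ a j))
      = Matrix.det (Matrix.of (fun i j : Fin r => ((sgn (ε i) : ℤ) : K r) * (w ε i) ^ a j)) from rfl]
  rw [Matrix.det_mul_column (fun i => ((sgn (ε i) : ℤ) : K r)) (fun i j => w ε i ^ a j)]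
  rfl

open Finset in
lemma prod_le_split {F : Type*} [CommMonoid F] {n : ℕ} (f : Fin n × Fin n → F) :
    ∏ p ∈ univ.filter (fun p : Fin n × Fin n => p.1 ≤ p.2), f p =
    (∏ i, f (i, i)) * ∏ i : Fin n, ∏ j ∈ Ioi i, f (i, j) := by
  classical
  have h1 : univ.filter (fun p : Fin n × Fin n => p.1 ≤ p.2)
      = univ.filter (fun p : Fin n × Fin n => p.1 = p.2)
        ∪ univ.filter (fun p : Fin n × Fin n => p.1 < p.2) := by
    ext p
    simp [le_iff_lt_or_eq, or_comm]
  have hdisj : Disjoint (univ.filter (fun p : Fin n × Fin n => p.1 = p.2))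
      (univ.filter (fun p : Fin n × Fin n => p.1 < p.2)) := by
    rw [Finset.disjoint_filter]
    exact fun p _ heq hlt => absurd heq (ne_of_lt hlt)
  rw [h1, prod_union hdisj]
  congr 1
  · refine Finset.prod_bij' (fun p (_ : p ∈ univ.filter (fun p : Fin n × Fin n => p.1 = p.2)) => p.1)
      (fun i (_ : i ∈ (univ : Finset (Fin n))) => ((i, i) : Fin n × Fin n))
      (by simp) (by simp) ?_ (by simp) ?_
    · rintro ⟨p1, p2⟩ hp
      simp only [mem_filter, mem_univ, true_and] at hp
      simp [hp]
    · rintro ⟨p1, p2⟩ hp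
      simp only [mem_filter, mem_univ, true_and] at hp
      simp [hp]
  · rw [Finset.prod_sigma' univ (fun i => Ioi i) (fun i j => f (i, j))]
    refine (Finset.prod_bij
      (fun (p : (_ : Fin n) × Fin n) (_ : p ∈ univ.sigma fun i => Ioi i) =>
        ((p.1, p.2) : Fin n × Fin n)) ?_ ?_ ?_ ?_).symm
    · intro p hp
      simp only [Finset.mem_sigma, Finset.mem_Ioi] at hp
      simp [hp.2]
    · rintro ⟨p1, p2⟩ _ ⟨q1, q2⟩ _ h
      simp only [Prod.mk.injEq] at h
      obtain ⟨rfl, rfl⟩ := h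
      rfl
    · intro b hb
      simp only [mem_filter, mem_univ, true_and] at hb
      exact ⟨⟨b.1, b.2⟩, by simp [Finset.mem_sigma, hb], rfl⟩
    · intro p hp
      rfl


theorem statement (r : ℕ) (hr : 1 ≤ r) (g : ℕ) (μ : Fin r → ℕ) (hμ : Antitone μ) :
    Matrix.det (Matrix.of fun i j : Fin r =>
        t r i ^ ((g : ℤ) + ((r : ℤ) - (j : ℕ)) - (μ j.rev : ℕ)) -
          t r i ^ (-((g : ℤ) + ((r : ℤ) - (j : ℕ)) - (μ j.rev : ℕ)))) /
      Matrix.det (Matrix.of fun i j : Fin r =>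
        t r i ^ ((r : ℤ) - (j : ℕ)) - t r i ^ (-((r : ℤ) - (j : ℕ)))) =
    ∑ ε : Fin r → Bool,
      schur r μ (fun i => t r i ^ sgn (ε i)) /
        ((∏ i, t r i ^ (sgn (ε i) * (g : ℤ))) *
          ∏ p ∈ Finset.univ.filter (fun p : Fin r × Fin r => p.1 ≤ p.2),
            (1 - t r p.1 ^ sgn (ε p.1) * t r p.2 ^ sgn (ε p.2))) := by
  classical
  set A : Matrix (Fin r) (Fin r) (K r) := Matrix.of fun i j : Fin r =>
      t r i ^ ((g : ℤ) + ((r : ℤ) - (j : ℕ)) - (μ j.rev : ℕ)) -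
        t r i ^ (-((g : ℤ) + ((r : ℤ) - (j : ℕ)) - (μ j.rev : ℕ))) with hAdef
  set B : Matrix (Fin r) (Fin r) (K r) := Matrix.of fun i j : Fin r =>
      t r i ^ ((r : ℤ) - (j : ℕ)) - t r i ^ (-((r : ℤ) - (j : ℕ))) with hBdef
  set y : Fin r → K r := fun i => t r i + (t r i)⁻¹ with hydef
  set D : K r := (∏ i, (t r i - (t r i)⁻¹)) * ∏ i : Fin r, ∏ j ∈ Finset.Ioi i, (y j - y i)
    with hDdef
  have ht0 : ∀ i, t r i ≠ 0 := t_ne_zero r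
  have htsub : ∀ i : Fin r, t r i - (t r i)⁻¹ ≠ 0 := by
    intro i h
    rw [sub_eq_zero] at h
    exact t_mul_t_ne_one r i i (by nth_rewrite 2 [h]; exact mul_inv_cancel₀ (ht0 i))
  have fij : ∀ (ε : Fin r → Bool) (i j : Fin r),
      ((w ε j)⁻¹ - (w ε i)⁻¹) * (1 - w ε i * w ε j) = y j - y i := by
    intro ε i j
    have h1 : ((w ε j)⁻¹ - (w ε i)⁻¹) * (1 - w ε i * w ε j)
        = (w ε j + (w ε j)⁻¹) - (w ε i + (w ε i)⁻¹) := by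
      field_simp [w_ne_zero ε i, w_ne_zero ε j]
      ring
    rw [h1, w_add_inv, w_add_inv, hydef]
  have hysub : ∀ i j : Fin r, i < j → y j - y i ≠ 0 := by
    intro i j hij
    rw [← fij (fun _ => true) i j]
    apply mul_ne_zero
    · rw [w_true _ i rfl, w_true _ j rfl, sub_ne_zero]
      exact fun h => t_ne_t r (ne_of_lt hij).symm (inv_injective h)
    · rw [sub_ne_zero]
      exact fun h => w_mul_w_ne_one (ε := fun _ => true) (le_of_lt hij) h.symm
  have hDne : D ≠ 0 := by
    apply mul_ne_zero
    · exact Finset.prod_ne_zero_iff.mpr fun i _ => htsub i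
    · exact Finset.prod_ne_zero_iff.mpr fun i _ => Finset.prod_ne_zero_iff.mpr
        fun j hj => hysub i j (Finset.mem_Ioi.mp hj)
  -- step 1 : joint column reversal
  have hquot : A.det / B.det
      = (A.submatrix id Fin.revPerm).det / (B.submatrix id Fin.revPerm).det := by
    rw [Matrix.det_permute' _ A, Matrix.det_permute' _ B]
    rcases Int.units_eq_one_or (Equiv.Perm.sign (Fin.revPerm : Equiv.Perm (Fin r))) with h | h <;>
      rw [h] <;> push_cast <;> simp [neg_div_neg_eq]
  -- step 2 : the denominator determinant
  have hBrev : (B.submatrix id Fin.revPerm).det = D := by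
    have hent : B.submatrix id Fin.revPerm = Matrix.of fun i j : Fin r =>
        (t r i - (t r i)⁻¹) *
          Polynomial.eval (y i) ((cheb j).map (algebraMap ℤ (K r))) := by
      ext i j
      have hj := j.isLt
      have hrev : ((r : ℤ) - ((Fin.revPerm j : Fin r) : ℕ)) = (((j : ℕ) + 1 : ℕ) : ℤ) := by
        have : ((Fin.revPerm j : Fin r) : ℕ) = r - ((j : ℕ) + 1) := Fin.val_rev j
        omega
      have hch := cheb_eval (algebraMap ℤ (K r)) (t r i) (ht0 i) (j : ℕ)
      simp only [Matrix.submatrix_apply, id_eq, hBdef, Matrix.of_apply, hydef]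
      rw [hrev, zpow_neg, zpow_natCast, ← inv_pow]
      exact hch.symm
    have hdet : Matrix.det (Matrix.of fun i j : Fin r =>
        Polynomial.eval (y i) ((cheb j).map (algebraMap ℤ (K r))))
        = ∏ i : Fin r, ∏ j ∈ Finset.Ioi i, (y j - y i) := by
      rw [← Matrix.det_eval_matrixOfPolynomials_eq_det_vandermonde y
        (fun j => (cheb j).map (algebraMap ℤ (K r)))
        (fun j => by rw [(cheb_aux j).1.natDegree_map]; exact (cheb_aux j).2)
        (fun j => (cheb_aux j).1.map _)]
      rw [Matrix.det_vandermonde]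
    rw [hent, Matrix.det_mul_column (fun i => t r i - (t r i)⁻¹)
      (fun i j : Fin r => Polynomial.eval (y i) ((cheb j).map (algebraMap ℤ (K r)))), hDdef]
    exact congrArg (fun z => (∏ i, (t r i - (t r i)⁻¹)) * z) hdet
  -- step 3 : the numerator determinant
  have hArev : A.submatrix id Fin.revPerm = Matrix.of fun i j : Fin r =>
      t r i ^ (((g : ℤ) + r) - ((μ j + (r - 1 - (j : ℕ)) : ℕ) : ℤ)) -
        t r i ^ (-(((g : ℤ) + r) - ((μ j + (r - 1 - (j : ℕ)) : ℕ) : ℤ))) := by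
    ext i j
    have hj := j.isLt
    have h1 : ((Fin.revPerm j : Fin r) : ℕ) = r - ((j : ℕ) + 1) := Fin.val_rev j
    have h2 : (Fin.revPerm j : Fin r).rev = j := Fin.rev_rev j
    have h3 : ((g : ℤ) + ((r : ℤ) - ((Fin.revPerm j : Fin r) : ℕ)) - (μ j : ℕ))
        = ((g : ℤ) + r) - ((μ j + (r - 1 - (j : ℕ)) : ℕ) : ℤ) := by
      rw [h1]; push_cast; omega
    simp only [Matrix.submatrix_apply, id_eq, hAdef, Matrix.of_apply, h2, h3]
  -- expansion of the numerator
  have hAdet : (A.submatrix id Fin.revPerm).det = ∑ ε : Fin r → Bool,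
      (∏ i, ((sgn (ε i) : ℤ) : K r)) *
        Matrix.det (Matrix.of fun i j : Fin r => w ε i ^
          (((g : ℤ) + r) - ((μ j + (r - 1 - (j : ℕ)) : ℕ) : ℤ))) := by
    rw [hArev]
    exact det_expand (fun j => ((g : ℤ) + r) - ((μ j + (r - 1 - (j : ℕ)) : ℕ) : ℤ))
  -- evaluation of each summand
  have hwdet : ∀ ε : Fin r → Bool,
      Matrix.det (Matrix.of fun i j : Fin r => w ε i ^
          (((g : ℤ) + r) - ((μ j + (r - 1 - (j : ℕ)) : ℕ) : ℤ)))
      = (∏ i, w ε i ^ ((g : ℤ) + 1)) *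
          (schur r μ (fun i => (w ε i)⁻¹) *
            ∏ i : Fin r, ∏ j ∈ Finset.Ioi i, (w ε j - w ε i)) := by
    intro ε
    have hw0 : ∀ i, w ε i ≠ 0 := w_ne_zero ε
    have h1 : (Matrix.of fun i j : Fin r => w ε i ^
          (((g : ℤ) + r) - ((μ j + (r - 1 - (j : ℕ)) : ℕ) : ℤ)))
        = Matrix.of fun i j : Fin r =>
            (w ε i ^ ((g : ℤ) + r)) * (((w ε i)⁻¹) ^ (μ j + (r - 1 - (j : ℕ)))) := by
      ext i j
      rw [Matrix.of_apply, Matrix.of_apply, zpow_sub₀ (hw0 i), div_eq_mul_inv, inv_pow,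
        ← zpow_natCast (w ε i) (μ j + (r - 1 - (j : ℕ)))]
    have hvdm : Matrix.det (Matrix.of fun i j : Fin r => ((w ε i)⁻¹) ^ (r - 1 - (j : ℕ)))
        = (∏ i, ((w ε i)⁻¹) ^ (r - 1)) *
            ∏ i : Fin r, ∏ j ∈ Finset.Ioi i, (w ε j - w ε i) := by
      rw [det_desc_vandermonde (fun i => (w ε i)⁻¹) (fun i => inv_ne_zero (hw0 i))]
      simp only [inv_inv]
    have hvne : Matrix.det (Matrix.of fun i j : Fin r => ((w ε i)⁻¹) ^ (r - 1 - (j : ℕ))) ≠ 0 := by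
      rw [hvdm]
      apply mul_ne_zero
      · exact Finset.prod_ne_zero_iff.mpr fun i _ => pow_ne_zero _ (inv_ne_zero (hw0 i))
      · exact Finset.prod_ne_zero_iff.mpr fun i _ => Finset.prod_ne_zero_iff.mpr
          fun j hj => sub_ne_zero.mpr (w_ne_w ε (ne_of_lt (Finset.mem_Ioi.mp hj)).symm)
    have hschur : Matrix.det (Matrix.of fun i j : Fin r =>
          ((w ε i)⁻¹) ^ (μ j + (r - 1 - (j : ℕ))))
        = schur r μ (fun i => (w ε i)⁻¹) *
            Matrix.det (Matrix.of fun i j : Fin r => ((w ε i)⁻¹) ^ (r - 1 - (j : ℕ))) := by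
      rw [show schur r μ (fun i => (w ε i)⁻¹)
          = Matrix.det (Matrix.of fun i j : Fin r => ((w ε i)⁻¹) ^ (μ j + (r - 1 - (j : ℕ)))) /
            Matrix.det (Matrix.of fun i j : Fin r => ((w ε i)⁻¹) ^ (r - 1 - (j : ℕ))) from rfl,
        div_mul_cancel₀ _ hvne]
    have hcollapse : (∏ i, w ε i ^ ((g : ℤ) + r)) * (∏ i, ((w ε i)⁻¹) ^ (r - 1))
        = ∏ i, w ε i ^ ((g : ℤ) + 1) := by
      rw [← Finset.prod_mul_distrib]
      refine Finset.prod_congr rfl fun i _ => ?_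
      rw [inv_pow, ← zpow_natCast (w ε i) (r - 1), ← zpow_neg, ← zpow_add₀ (hw0 i)]
      congr 1
      push_cast
      omega
    rw [h1, Matrix.det_mul_column (fun i => w ε i ^ ((g : ℤ) + r))
        (fun i j : Fin r => ((w ε i)⁻¹) ^ (μ j + (r - 1 - (j : ℕ)))),
      show (Matrix.det fun i j : Fin r => ((w ε i)⁻¹) ^ (μ j + (r - 1 - (j : ℕ))))
        = (Matrix.of fun i j : Fin r => ((w ε i)⁻¹) ^ (μ j + (r - 1 - (j : ℕ)))).det from rfl,
      hschur, hvdm, ← hcollapse]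
    ring
  -- reindexing the sum by flipping all signs
  have hwnot : ∀ ε : Fin r → Bool, w (fun i => !(ε i)) = fun i => (w ε i)⁻¹ := by
    intro ε; funext i
    show t r i ^ sgn (!(ε i)) = (t r i ^ sgn (ε i))⁻¹
    cases h : ε i <;> simp [sgn, zpow_neg]
  have hAdet2 : (A.submatrix id Fin.revPerm).det = ∑ ε : Fin r → Bool,
      (∏ i, -((sgn (ε i) : ℤ) : K r)) *
        ((∏ i, ((w ε i)⁻¹) ^ ((g : ℤ) + 1)) *
          (schur r μ (w ε) *
            ∏ i : Fin r, ∏ j ∈ Finset.Ioi i, ((w ε j)⁻¹ - (w ε i)⁻¹))) := by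
    rw [hAdet]
    refine Fintype.sum_bijective (fun (ε : Fin r → Bool) (i : Fin r) => !(ε i))
      (Function.Involutive.bijective fun ε => by funext i; simp) _ _ fun ε => ?_
    show (∏ i, ((sgn (ε i) : ℤ) : K r)) *
        Matrix.det (Matrix.of fun i j : Fin r => w ε i ^
          (((g : ℤ) + r) - ((μ j + (r - 1 - (j : ℕ)) : ℕ) : ℤ)))
      = (∏ i, -((sgn (!(ε i)) : ℤ) : K r)) *
        ((∏ i, ((w (fun i => !(ε i)) i)⁻¹) ^ ((g : ℤ) + 1)) *
          (schur r μ (w (fun i => !(ε i))) *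
            ∏ i : Fin r, ∏ j ∈ Finset.Ioi i,
              ((w (fun i => !(ε i)) j)⁻¹ - (w (fun i => !(ε i)) i)⁻¹)))
    have h3 : (∏ i, -((sgn (!(ε i)) : ℤ) : K r)) = ∏ i, ((sgn (ε i) : ℤ) : K r) := by
      refine Finset.prod_congr rfl fun i _ => ?_
      cases h : ε i <;> simp [sgn, h]
    simp only [hwnot ε, inv_inv]
    rw [hwdet ε, h3]
  -- the per-sign identity and conclusion
  rw [hquot, hBrev, hAdet2, Finset.sum_div]
  refine Finset.sum_congr rfl fun ε _ => ?_
  have hw0 : ∀ i, w ε i ≠ 0 := w_ne_zero ε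
  have hwl : ∀ i, t r i ^ sgn (ε i) = w ε i := fun _ => rfl
  simp only [hwl]
  have htg : (∏ i, t r i ^ (sgn (ε i) * (g : ℤ))) = ∏ i, w ε i ^ (g : ℤ) := by
    refine Finset.prod_congr rfl fun i _ => ?_
    rw [zpow_mul]
    rfl
  have hPsplit : (∏ p ∈ Finset.univ.filter (fun p : Fin r × Fin r => p.1 ≤ p.2),
        (1 - w ε p.1 * w ε p.2))
      = (∏ i, (1 - w ε i * w ε i)) *
          ∏ i : Fin r, ∏ j ∈ Finset.Ioi i, (1 - w ε i * w ε j) :=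
    prod_le_split (fun p => 1 - w ε p.1 * w ε p.2)
  have hPne : (∏ p ∈ Finset.univ.filter (fun p : Fin r × Fin r => p.1 ≤ p.2),
        (1 - w ε p.1 * w ε p.2)) ≠ 0 := by
    refine Finset.prod_ne_zero_iff.mpr fun p hp => ?_
    have hle : p.1 ≤ p.2 := (Finset.mem_filter.mp hp).2
    exact sub_ne_zero.mpr (Ne.symm (w_mul_w_ne_one ε hle))
  have hTgne : (∏ i, t r i ^ (sgn (ε i) * (g : ℤ))) ≠ 0 :=
    Finset.prod_ne_zero_iff.mpr fun i _ => zpow_ne_zero _ (ht0 i)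
  have hz : ∀ i, ((w ε i)⁻¹) ^ ((g : ℤ) + 1) * w ε i ^ (g : ℤ) = (w ε i)⁻¹ := by
    intro i
    rw [inv_zpow, ← zpow_neg, ← zpow_add₀ (hw0 i)]
    rw [show -((g : ℤ) + 1) + g = -1 by ring, zpow_neg_one]
  have hfi : ∀ i, (-((sgn (ε i) : ℤ) : K r)) *
      (((w ε i)⁻¹) ^ ((g : ℤ) + 1) * (w ε i ^ (g : ℤ) * (1 - w ε i * w ε i)))
      = t r i - (t r i)⁻¹ := by
    intro i
    rw [show ((w ε i)⁻¹) ^ ((g : ℤ) + 1) * (w ε i ^ (g : ℤ) * (1 - w ε i * w ε i))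
        = (((w ε i)⁻¹) ^ ((g : ℤ) + 1) * w ε i ^ (g : ℤ)) * (1 - w ε i * w ε i) by ring,
      hz i]
    cases h : ε i
    · rw [w_false ε i h]
      simp only [sgn, h, if_false, Int.cast_neg, Int.cast_one, neg_neg, one_mul, inv_inv]
      rw [mul_sub, mul_one, ← mul_assoc, mul_inv_cancel₀ (ht0 i), one_mul]
      norm_num
    · rw [w_true ε i h]
      simp only [sgn, h, if_true, Int.cast_one, neg_mul, one_mul]
      rw [mul_sub, mul_one, ← mul_assoc, inv_mul_cancel₀ (ht0 i), one_mul, neg_sub]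
  have key : (∏ i, -((sgn (ε i) : ℤ) : K r)) *
      ((∏ i, ((w ε i)⁻¹) ^ ((g : ℤ) + 1)) *
        ((∏ i : Fin r, ∏ j ∈ Finset.Ioi i, ((w ε j)⁻¹ - (w ε i)⁻¹)) *
          ((∏ i, t r i ^ (sgn (ε i) * (g : ℤ))) *
            ∏ p ∈ Finset.univ.filter (fun p : Fin r × Fin r => p.1 ≤ p.2),
              (1 - w ε p.1 * w ε p.2)))) = D := by
    rw [htg, hPsplit]
    calc (∏ i, -((sgn (ε i) : ℤ) : K r)) *
        ((∏ i, ((w ε i)⁻¹) ^ ((g : ℤ) + 1)) *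
          ((∏ i : Fin r, ∏ j ∈ Finset.Ioi i, ((w ε j)⁻¹ - (w ε i)⁻¹)) *
            ((∏ i, w ε i ^ (g : ℤ)) *
              ((∏ i, (1 - w ε i * w ε i)) *
                ∏ i : Fin r, ∏ j ∈ Finset.Ioi i, (1 - w ε i * w ε j)))))
        = (∏ i, (-((sgn (ε i) : ℤ) : K r)) *
            (((w ε i)⁻¹) ^ ((g : ℤ) + 1) * (w ε i ^ (g : ℤ) * (1 - w ε i * w ε i)))) *
          ∏ i : Fin r, ∏ j ∈ Finset.Ioi i,
            (((w ε j)⁻¹ - (w ε i)⁻¹) * (1 - w ε i * w ε j)) := by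
          simp only [Finset.prod_mul_distrib]
          ring
      _ = (∏ i, (t r i - (t r i)⁻¹)) * ∏ i : Fin r, ∏ j ∈ Finset.Ioi i, (y j - y i) := by
          rw [Finset.prod_congr rfl fun i _ => hfi i,
            Finset.prod_congr rfl fun i _ => Finset.prod_congr rfl fun j _ => fij ε i j]
      _ = D := hDdef.symm
  rw [div_eq_div_iff hDne (mul_ne_zero hTgne hPne)]
  calc (∏ i, -((sgn (ε i) : ℤ) : K r)) *
      ((∏ i, ((w ε i)⁻¹) ^ ((g : ℤ) + 1)) *
        (schur r μ (w ε) *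
          ∏ i : Fin r, ∏ j ∈ Finset.Ioi i, ((w ε j)⁻¹ - (w ε i)⁻¹))) *
      ((∏ i, t r i ^ (sgn (ε i) * (g : ℤ))) *
        ∏ p ∈ Finset.univ.filter (fun p : Fin r × Fin r => p.1 ≤ p.2),
          (1 - w ε p.1 * w ε p.2))
      = schur r μ (w ε) *
        ((∏ i, -((sgn (ε i) : ℤ) : K r)) *
          ((∏ i, ((w ε i)⁻¹) ^ ((g : ℤ) + 1)) *
            ((∏ i : Fin r, ∏ j ∈ Finset.Ioi i, ((w ε j)⁻¹ - (w ε i)⁻¹)) *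
              ((∏ i, t r i ^ (sgn (ε i) * (g : ℤ))) *
                ∏ p ∈ Finset.univ.filter (fun p : Fin r × Fin r => p.1 ≤ p.2),
                  (1 - w ε p.1 * w ε p.2))))) := by ring
    _ = schur r μ (w ε) * D := by rw [key]

end Stmt9
end
end
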